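/- arXiv:1112.2367 — 5 statements merged into one kernel-verified Lean document; each statement's English description precedes it below -/
import Mathlib

section
/- Let Φ be the root system of type B₄ and P_k Kostant's partition function (number of multisets of k positive roots summing to a given weight). For every even integer m ≥ 0, ∑_{u ∈ W} (−1)^{ℓ(u)} P_m(u·((m+1)ω₄) − ω₄) = 1, where ω₄ = (ε₁+ε₂+ε₃+ε₄)/2. -/
noncomputable section

/-- the weight space of `B₄`, with coordinates in the `ε`-basis -/
abbrev V4 := Fin 4 → ℚ

/-- `ε_i` -/
def e4 (i : Fin 4) : V4 := Pi.single i 1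

/-- The sixteen positive roots of `B₄`: `ε₁, ε₂, ε₃, ε₄` and `ε_i ± ε_j` for `i < j`. -/
def posB4 : Finset V4 :=
  {e4 0, e4 1, e4 2, e4 3,
   e4 0 + e4 1, e4 0 + e4 2, e4 0 + e4 3, e4 1 + e4 2, e4 1 + e4 3, e4 2 + e4 3,
   e4 0 - e4 1, e4 0 - e4 2, e4 0 - e4 3, e4 1 - e4 2, e4 1 - e4 3, e4 2 - e4 3}

/-- Kostant's partition function: the number of ways (as unordered multisets) to write `ν`
as a sum of exactly `k` positive roots. -/
def PB4 (k : ℕ) (ν : V4) : ℕ :=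
  Set.ncard {m : Multiset V4 | Multiset.card m = k ∧ (∀ x ∈ m, x ∈ posB4) ∧ m.sum = ν}

/-- the standard inner product -/
def dot4 (x y : V4) : ℚ := ∑ i, x i * y i

/-- the reflection in the hyperplane orthogonal to `α` -/
def reflB4 (α : V4) : V4 → V4 := fun x => x - (2 * dot4 x α / dot4 α α) • α

/-- the simple roots `ε₁ - ε₂`, `ε₂ - ε₃`, `ε₃ - ε₄`, `ε₄` of `B₄` -/
def simpleB4 : Fin 4 → V4 := fun i =>
  if i = 0 then e4 0 - e4 1 else if i = 1 then e4 1 - e4 2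
  else if i = 2 then e4 2 - e4 3 else e4 3

/-- the composite of the simple reflections listed in `l` -/
def compB4 (l : List (Fin 4)) : V4 → V4 :=
  (l.map (fun i => reflB4 (simpleB4 i))).foldr (· ∘ ·) id

/-- the length of a Weyl group element: the minimal length of a word in the simple
reflections representing it -/
def lenB4 (u : V4 → V4) : ℕ := sInf {m | ∃ l : List (Fin 4), l.length = m ∧ u = compB4 l}

/-- the half-sum `ρ` of the positive roots -/
def ρ4 : V4 := (2 : ℚ)⁻¹ • ∑ α ∈ posB4, α

/-- the fundamental weight `ω₄ = (ε₁ + ε₂ + ε₃ + ε₄)/2` -/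
def ω4 : V4 := (2 : ℚ)⁻¹ • (e4 0 + e4 1 + e4 2 + e4 3)

-- For `B₄` and even `m ≥ 0`, `∑_{u ∈ W} (-1)^{ℓ(u)} P_m(u·((m+1)ω₄) - ω₄) = 1`,
-- where `u·λ = u(λ + ρ) - ρ` is the dot action.

-- ===== auxiliary development =====

/-- signed permutations -/
abbrev SP := Equiv.Perm (Fin 4) × (Fin 4 → Bool)

def sg (b : Bool) : ℚ := if b then -1 else 1

def act (p : SP) : V4 → V4 := fun x i => sg (p.2 i) * x (p.1 i)

def spmul (p q : SP) : SP := (p.1.trans q.1, fun i => xor (p.2 i) (q.2 (p.1 i)))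

def spone : SP := (1, fun _ => false)

def gen : Fin 4 → SP := fun i =>
  if i = 0 then (Equiv.swap 0 1, fun _ => false)
  else if i = 1 then (Equiv.swap 1 2, fun _ => false)
  else if i = 2 then (Equiv.swap 2 3, fun _ => false)
  else (1, fun j => decide (j = 3))

def phi : List (Fin 4) → SP := fun l => l.foldr (fun i p => spmul (gen i) p) spone

lemma act_one : act spone = id := by
  funext x i; simp [act, spone, sg]

lemma sg_mul (a b : Bool) : sg (xor a b) = sg a * sg b := by
  cases a <;> cases b <;> norm_num [sg]

lemma act_mul (p q : SP) : act (spmul p q) = act p ∘ act q := by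
  funext x i
  simp only [act, spmul, Function.comp_apply, Equiv.trans_apply, sg_mul]
  ring

lemma act_gen (i : Fin 4) : reflB4 (simpleB4 i) = act (gen i) := by
  fin_cases i <;> (funext x j; fin_cases j) <;>
    simp [reflB4, simpleB4, dot4, e4, act, gen, sg, Fin.sum_univ_four,
      Pi.single_apply, Equiv.swap_apply_def] <;> ring

lemma compB4_phi (l : List (Fin 4)) : compB4 l = act (phi l) := by
  induction l with
  | nil => rw [show compB4 [] = id from rfl, show phi [] = spone from rfl, act_one]
  | cons i l ih =>
      have h1 : compB4 (i :: l) = reflB4 (simpleB4 i) ∘ compB4 l := rfl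
      have h2 : phi (i :: l) = spmul (gen i) (phi l) := rfl
      rw [h1, ih, act_gen, h2, act_mul]

-- injectivity of act
lemma act_inj {p q : SP} (h : act p = act q) : p = q := by
  have hx : ∀ i : Fin 4, sg (p.2 i) * ((p.1 i : ℕ) + 1 : ℚ) = sg (q.2 i) * ((q.1 i : ℕ) + 1 : ℚ) := by
    intro i
    have := congrFun (congrFun h (fun j : Fin 4 => ((j : ℕ) : ℚ) + 1)) i
    simpa [act] using this
  have key : ∀ i, p.1 i = q.1 i ∧ p.2 i = q.2 i := by
    intro i
    have h1 : (0:ℚ) < (p.1 i : ℕ) + 1 := by positivity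
    have h2 : (0:ℚ) < (q.1 i : ℕ) + 1 := by positivity
    have := hx i
    cases hp : p.2 i <;> cases hq : q.2 i <;> rw [hp, hq] at this <;> simp [sg] at this
    · exact ⟨Fin.val_injective (by exact_mod_cast this), rfl⟩
    · nlinarith
    · nlinarith
    · exact ⟨Fin.val_injective (by exact_mod_cast this), rfl⟩
  have e1 : p.1 = q.1 := Equiv.ext fun i => (key i).1
  have e2 : p.2 = q.2 := funext fun i => (key i).2
  exact Prod.ext e1 e2

-- the sign character
def eps (p : SP) : ℤ :=
  ((Equiv.Perm.sign p.1 : ℤˣ) : ℤ) * ∏ i, (if p.2 i then (-1 : ℤ) else 1)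

lemma eps_mul (p q : SP) : eps (spmul p q) = eps p * eps q := by
  unfold eps spmul
  have hsign : ((Equiv.Perm.sign (p.1.trans q.1) : ℤˣ) : ℤ)
      = ((Equiv.Perm.sign p.1 : ℤˣ) : ℤ) * ((Equiv.Perm.sign q.1 : ℤˣ) : ℤ) := by
    have : p.1.trans q.1 = q.1 * p.1 := rfl
    rw [this, Equiv.Perm.sign_mul]
    push_cast
    ring
  have hprod : (∏ i, (if xor (p.2 i) (q.2 (p.1 i)) then (-1 : ℤ) else 1))
      = (∏ i, (if p.2 i then (-1 : ℤ) else 1)) * ∏ i, (if q.2 (p.1 i) then (-1 : ℤ) else 1) := by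
    rw [← Finset.prod_mul_distrib]
    apply Finset.prod_congr rfl
    intro i _
    cases hp : p.2 i <;> cases hq : q.2 (p.1 i) <;> simp [hp, hq]
  have hcomp : (∏ i, (if q.2 (p.1 i) then (-1 : ℤ) else 1)) = ∏ i, (if q.2 i then (-1 : ℤ) else 1) :=
    Equiv.prod_comp p.1 (fun i => if q.2 i then (-1 : ℤ) else 1)
  rw [hsign, hprod, hcomp]
  ring

lemma eps_gen (i : Fin 4) : eps (gen i) = -1 := by
  fin_cases i <;> simp [eps, gen, Equiv.Perm.sign_swap, Fin.prod_univ_four]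

lemma eps_phi (l : List (Fin 4)) : eps (phi l) = (-1) ^ l.length := by
  induction l with
  | nil =>
      show eps spone = _
      simp [eps, spone]
  | cons i l ih =>
      have h2 : phi (i :: l) = spmul (gen i) (phi l) := rfl
      rw [h2, eps_mul, eps_gen, ih, List.length_cons]
      ring

-- reachability
def Reach (p : SP) : Prop := ∃ l : List (Fin 4), phi l = p

lemma spmul_assoc (a b c : SP) : spmul (spmul a b) c = spmul a (spmul b c) := by
  unfold spmul
  refine Prod.ext rfl ?_
  funext i
  simp [Bool.xor_assoc]

lemma spmul_one (p : SP) : spmul p spone = p := by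
  unfold spmul spone
  refine Prod.ext (by ext j; rfl) ?_
  funext i; simp

lemma phi_append (l₁ l₂ : List (Fin 4)) : phi (l₁ ++ l₂) = spmul (phi l₁) (phi l₂) := by
  induction l₁ with
  | nil =>
      show phi l₂ = spmul spone (phi l₂)
      unfold spmul spone
      refine Prod.ext (by ext j; rfl) ?_
      funext i; simp
  | cons i l ih =>
      show spmul (gen i) (phi (l ++ l₂)) = spmul (spmul (gen i) (phi l)) (phi l₂)
      rw [ih, spmul_assoc]

lemma Reach.mul {p q : SP} (hp : Reach p) (hq : Reach q) : Reach (spmul p q) := by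
  obtain ⟨l₁, h₁⟩ := hp
  obtain ⟨l₂, h₂⟩ := hq
  exact ⟨l₁ ++ l₂, by rw [phi_append, h₁, h₂]⟩

def swapWord (x y : Fin 4) : List (Fin 4) :=
  if x = y then []
  else if (x = 0 ∧ y = 1) ∨ (x = 1 ∧ y = 0) then [0]
  else if (x = 1 ∧ y = 2) ∨ (x = 2 ∧ y = 1) then [1]
  else if (x = 2 ∧ y = 3) ∨ (x = 3 ∧ y = 2) then [2]
  else if (x = 0 ∧ y = 2) ∨ (x = 2 ∧ y = 0) then [0, 1, 0]
  else if (x = 1 ∧ y = 3) ∨ (x = 3 ∧ y = 1) then [1, 2, 1]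
  else [0, 1, 2, 1, 0]

lemma phi_swapWord : ∀ x y : Fin 4, x ≠ y → phi (swapWord x y) = (Equiv.swap x y, fun _ => false) := by
  decide

lemma reach_perm (σ : Equiv.Perm (Fin 4)) : Reach (σ, fun _ => false) := by
  refine Equiv.Perm.swap_induction_on σ ⟨[], rfl⟩ ?_
  intro f x y hxy ih
  · have h : (Equiv.swap x y * f, fun _ => false) = spmul (f, fun _ => false) (Equiv.swap x y, fun _ => false) := by
        unfold spmul
        refine Prod.ext rfl ?_
        funext i; simp
    rw [h]
    exact Reach.mul ih ⟨swapWord x y, phi_swapWord x y hxy⟩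

def flipWord (δ : Fin 4 → Bool) : List (Fin 4) :=
  (if δ 0 then [0, 1, 2, 3, 2, 1, 0] else []) ++ (if δ 1 then [1, 2, 3, 2, 1] else [])
    ++ (if δ 2 then [2, 3, 2] else []) ++ (if δ 3 then [3] else [])

lemma phi_flipWord : ∀ δ : Fin 4 → Bool, phi (flipWord δ) = (1, δ) := by
  decide

lemma reach_all (p : SP) : Reach p := by
  have h : p = spmul (p.1, fun _ => false) (1, fun i => p.2 (p.1.symm i)) := by
    unfold spmul
    refine Prod.ext (by ext j; rfl) ?_
    funext i; simp
  rw [h]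
  exact Reach.mul (reach_perm p.1) ⟨flipWord _, phi_flipWord _⟩

open Classical in
lemma W_eq (W : Finset (V4 → V4))
    (hW : ∀ u, u ∈ W ↔ ∃ l : List (Fin 4), u = compB4 l) :
    W = (Finset.univ : Finset SP).image act := by
  ext u
  rw [hW, Finset.mem_image]
  constructor
  · rintro ⟨l, rfl⟩
    exact ⟨phi l, Finset.mem_univ _, (compB4_phi l).symm⟩
  · rintro ⟨p, -, rfl⟩
    obtain ⟨l, hl⟩ := reach_all p
    exact ⟨l, by rw [← hl, compB4_phi]⟩

lemma len_eps (p : SP) : (-1 : ℤ) ^ lenB4 (act p) = eps p := by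
  have hne : {m | ∃ l : List (Fin 4), l.length = m ∧ act p = compB4 l}.Nonempty := by
    obtain ⟨l, hl⟩ := reach_all p
    exact ⟨l.length, l, rfl, by rw [compB4_phi, hl]⟩
  have hmem := Nat.sInf_mem hne
  obtain ⟨l, hlen, hcomp⟩ := hmem
  have hp : p = phi l := act_inj (by rw [hcomp, compB4_phi])
  rw [show lenB4 (act p) = sInf {m | ∃ l : List (Fin 4), l.length = m ∧ act p = compB4 l} from rfl,
    ← hlen, hp, eps_phi]

-- ===== root facts =====

lemma mem_posB4_elim {x : V4} (hx : x ∈ posB4) :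
    x = e4 0 ∨ x = e4 1 ∨ x = e4 2 ∨ x = e4 3 ∨
    x = e4 0 + e4 1 ∨ x = e4 0 + e4 2 ∨ x = e4 0 + e4 3 ∨ x = e4 1 + e4 2 ∨
    x = e4 1 + e4 3 ∨ x = e4 2 + e4 3 ∨
    x = e4 0 - e4 1 ∨ x = e4 0 - e4 2 ∨ x = e4 0 - e4 3 ∨ x = e4 1 - e4 2 ∨
    x = e4 1 - e4 3 ∨ x = e4 2 - e4 3 := by
  simpa [posB4, Finset.mem_insert, Finset.mem_singleton] using hx

lemma dot4_root_le {w : V4} (hw : ∀ i, w i = 1 ∨ w i = -1) {x : V4} (hx : x ∈ posB4) :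
    dot4 w x ≤ 2 := by
  have hb : ∀ i, w i ≤ 1 ∧ -1 ≤ w i := fun i => by rcases hw i with h | h <;> rw [h] <;> norm_num
  rcases mem_posB4_elim hx with rfl|rfl|rfl|rfl|rfl|rfl|rfl|rfl|rfl|rfl|rfl|rfl|rfl|rfl|rfl|rfl <;>
    simp [dot4, Fin.sum_univ_four, e4, Pi.single_apply] <;>
    linarith [(hb 0).1, (hb 0).2, (hb 1).1, (hb 1).2, (hb 2).1, (hb 2).2, (hb 3).1, (hb 3).2]

lemma root_eq2_pair {x : V4} (hx : x ∈ posB4) (h2 : dot4 (fun _ => (1:ℚ)) x = 2) :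
    x = e4 0 + e4 1 ∨ x = e4 0 + e4 2 ∨ x = e4 0 + e4 3 ∨ x = e4 1 + e4 2 ∨
    x = e4 1 + e4 3 ∨ x = e4 2 + e4 3 := by
  rcases mem_posB4_elim hx with rfl|rfl|rfl|rfl|rfl|rfl|rfl|rfl|rfl|rfl|rfl|rfl|rfl|rfl|rfl|rfl <;>
    simp [dot4, Fin.sum_univ_four, e4, Pi.single_apply] at h2 ⊢ <;> norm_num at h2

lemma dot4_add (w a b : V4) : dot4 w (a + b) = dot4 w a + dot4 w b := by
  unfold dot4
  rw [← Finset.sum_add_distrib]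
  exact Finset.sum_congr rfl fun i _ => by simp [mul_add]

lemma dot4_msum (w : V4) (m : Multiset V4) :
    dot4 w m.sum = (m.map (fun x => dot4 w x)).sum := by
  induction m using Multiset.induction with
  | empty => simp [dot4]
  | cons a s ih => simp [Multiset.sum_cons, dot4_add, ih]

lemma msum_nonneg_zero (m : Multiset ℚ) (h0 : ∀ x ∈ m, 0 ≤ x) (hs : m.sum = 0) :
    ∀ x ∈ m, x = 0 := by
  induction m using Multiset.induction with
  | empty => simp
  | cons a s ih =>
      have ha : 0 ≤ a := h0 a (Multiset.mem_cons_self a s)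
      have hsn : 0 ≤ s.sum := Multiset.sum_nonneg (fun x hx => h0 x (Multiset.mem_cons_of_mem hx))
      rw [Multiset.sum_cons] at hs
      have ha0 : a = 0 := by linarith
      have hs0 : s.sum = 0 := by linarith
      intro x hx
      rcases Multiset.mem_cons.1 hx with rfl | hx'
      · exact ha0
      · exact ih (fun y hy => h0 y (Multiset.mem_cons_of_mem hy)) hs0 x hx'

-- ===== evaluation of ρ4, ω4 =====

def rootList : List V4 :=
  [e4 0, e4 1, e4 2, e4 3,
   e4 0 + e4 1, e4 0 + e4 2, e4 0 + e4 3, e4 1 + e4 2, e4 1 + e4 3, e4 2 + e4 3,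
   e4 0 - e4 1, e4 0 - e4 2, e4 0 - e4 3, e4 1 - e4 2, e4 1 - e4 3, e4 2 - e4 3]

def Ev (v : V4) : ℚ := v 0 + 8 * v 1 + 64 * v 2 + 512 * v 3

lemma nodupL : rootList.Nodup := by
  have h : (rootList.map Ev).Nodup := by
    simp [rootList, Ev, e4, Pi.single_apply, List.nodup_cons, List.mem_cons]
    norm_num
  exact h.of_map Ev

lemma posB4_eq : posB4 = ⟨(rootList : Multiset V4), nodupL⟩ := by
  ext x
  simp [posB4, rootList, Finset.mem_insert, Finset.mem_singleton, Finset.mem_mk,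
    List.mem_cons, or_assoc]

lemma sum_posB4 : ∑ α ∈ posB4, α = fun i : Fin 4 => (7 : ℚ) - 2 * (i.val : ℚ) := by
  rw [posB4_eq]
  show (Multiset.map id (rootList : Multiset V4)).sum = _
  rw [Multiset.map_coe, Multiset.sum_coe]
  funext i
  fin_cases i <;> simp [rootList, e4, Pi.single_apply] <;> norm_num

lemma rho_apply (i : Fin 4) : ρ4 i = ((7:ℚ) - 2 * (i.val : ℚ)) / 2 := by
  rw [ρ4, sum_posB4]
  simp [Pi.smul_apply, smul_eq_mul]
  ring

lemma omega_apply (i : Fin 4) : ω4 i = 1/2 := by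
  fin_cases i <;> simp [ω4, e4, Pi.single_apply] <;> norm_num

lemma arg_eq (n : ℕ) (p : SP) :
    act p ((((n + n : ℕ) : ℚ) + 1) • ω4 + ρ4) - ρ4 - ω4
      = fun i => sg (p.2 i) * ((n:ℚ) + 4 - ((p.1 i).val : ℚ)) - (4 - (i.val : ℚ)) := by
  funext i
  have hv : ∀ j : Fin 4, ((((n + n : ℕ) : ℚ) + 1) • ω4 + ρ4) j = (n:ℚ) + 4 - (j.val:ℚ) := by
    intro j
    rw [Pi.add_apply, Pi.smul_apply, smul_eq_mul, omega_apply, rho_apply]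
    push_cast
    ring
  show act p _ i - ρ4 i - ω4 i = _
  rw [show act p ((((n + n : ℕ) : ℚ) + 1) • ω4 + ρ4) i
      = sg (p.2 i) * ((((n + n : ℕ) : ℚ) + 1) • ω4 + ρ4) (p.1 i) from rfl,
    hv (p.1 i), rho_apply, omega_apply]
  ring

-- ===== vanishing when a sign is flipped =====

lemma PB4_flip (n : ℕ) (p : SP) (i0 : Fin 4) (hi0 : p.2 i0 = true) :
    PB4 (n + n) (fun i => sg (p.2 i) * ((n:ℚ) + 4 - ((p.1 i).val : ℚ)) - (4 - (i.val : ℚ))) = 0 := by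
  set ν : V4 := fun i => sg (p.2 i) * ((n:ℚ) + 4 - ((p.1 i).val : ℚ)) - (4 - (i.val : ℚ)) with hν
  have hempty : {m : Multiset V4 | Multiset.card m = n + n ∧ (∀ x ∈ m, x ∈ posB4) ∧ m.sum = ν} = ∅ := by
    rw [Set.eq_empty_iff_forall_notMem]
    rintro m ⟨hcard, hmem, hsum⟩
    set w : V4 := fun i => sg (p.2 i) with hwdef
    have hw : ∀ i, w i = 1 ∨ w i = -1 := by
      intro i; cases h : p.2 i <;> simp [hwdef, sg, h]
    have hsq : ∀ i, w i * w i = 1 := by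
      intro i; rcases hw i with h | h <;> rw [h] <;> norm_num
    -- upper bound
    have hub : dot4 w m.sum ≤ 2 * ((n : ℚ) + n) := by
      rw [dot4_msum]
      have h2 : ∀ q ∈ m.map (fun x => dot4 w x), q ≤ 2 := by
        intro q hq
        obtain ⟨x, hx, rfl⟩ := Multiset.mem_map.1 hq
        exact dot4_root_le hw (hmem x hx)
      have := Multiset.sum_le_card_nsmul _ 2 h2
      rw [Multiset.card_map, hcard] at this
      calc (m.map (fun x => dot4 w x)).sum ≤ (n + n) • (2:ℚ) := this
        _ = 2 * ((n:ℚ) + n) := by push_cast [nsmul_eq_mul]; ring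
    -- lower bound
    have hterm : ∀ i : Fin 4, w i * ν i
        = ((n:ℚ) + 4 - ((p.1 i).val : ℚ)) - w i * (4 - (i.val : ℚ)) := by
      intro i
      have h := hsq i
      show w i * (w i * ((n:ℚ) + 4 - ((p.1 i).val : ℚ)) - (4 - (i.val : ℚ))) = _
      linear_combination ((n:ℚ) + 4 - ((p.1 i).val : ℚ)) * h
    have hσ : ((p.1 0 : Fin 4).val : ℚ) + ((p.1 1 : Fin 4).val : ℚ)
        + ((p.1 2 : Fin 4).val : ℚ) + ((p.1 3 : Fin 4).val : ℚ) = 6 := by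
      have := Equiv.sum_comp p.1 (fun j : Fin 4 => (j.val : ℚ))
      rw [Fin.sum_univ_four, Fin.sum_univ_four] at this
      rw [show ((0:Fin 4).val) = 0 from rfl, show ((1:Fin 4).val) = 1 from rfl,
        show ((2:Fin 4).val) = 2 from rfl, show ((3:Fin 4).val) = 3 from rfl] at this
      norm_num at this
      linarith [this]
    have hwb : ∀ i : Fin 4, w i * (4 - (i.val : ℚ)) ≤ 4 - (i.val : ℚ) := by
      intro i
      have hi : (i.val : ℚ) ≤ 3 := by exact_mod_cast Fin.is_le i
      rcases hw i with h | h <;> rw [h] <;> linarith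
    have hneg : w i0 = -1 := by simp [hwdef, sg, hi0]
    have v3 : (((3:Fin 4).val : ℕ) : ℚ) = 3 := by
      rw [show ((3:Fin 4).val) = 3 from rfl]; norm_num
    have hQb : ∀ i : Fin 4, w i * (4 - (i.val : ℚ)) ≤ 4 - (i.val : ℚ) := hwb
    have hQsum : ∑ i : Fin 4, w i * (4 - (i.val : ℚ)) ≤ 8 := by
      have hBsum : ∑ i : Fin 4, (4 - ((i : Fin 4).val : ℚ)) = 10 := by
        rw [Fin.sum_univ_four]
        rw [show ((0:Fin 4).val) = 0 from rfl, show ((1:Fin 4).val) = 1 from rfl,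
          show ((2:Fin 4).val) = 2 from rfl, show ((3:Fin 4).val) = 3 from rfl]
        norm_num
      have e1 : w i0 * (4 - (i0.val : ℚ)) + ∑ i ∈ Finset.univ.erase i0, (w i * (4 - (i.val : ℚ)))
          = ∑ i : Fin 4, w i * (4 - (i.val : ℚ)) :=
        Finset.add_sum_erase _ (fun i : Fin 4 => w i * (4 - (i.val : ℚ))) (Finset.mem_univ _)
      have e2 : (4 - (i0.val : ℚ)) + ∑ i ∈ Finset.univ.erase i0, (4 - ((i : Fin 4).val : ℚ))
          = ∑ i : Fin 4, (4 - ((i : Fin 4).val : ℚ)) :=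
        Finset.add_sum_erase _ (fun i : Fin 4 => (4 - ((i : Fin 4).val : ℚ))) (Finset.mem_univ _)
      have e3 : ∑ i ∈ Finset.univ.erase i0, (w i * (4 - (i.val : ℚ)))
          ≤ ∑ i ∈ Finset.univ.erase i0, (4 - ((i : Fin 4).val : ℚ)) :=
        Finset.sum_le_sum (fun i _ => hQb i)
      have e4 : w i0 * (4 - (i0.val : ℚ)) = -(4 - (i0.val : ℚ)) := by rw [hneg]; ring
      have hi : (i0.val : ℚ) ≤ 3 := by exact_mod_cast Fin.is_le i0
      rw [hBsum] at e2
      linarith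
    have hQ4 : ∑ i : Fin 4, w i * (4 - (i.val : ℚ))
        = w 0 * (4 - ((0:Fin 4).val : ℚ)) + w 1 * (4 - ((1:Fin 4).val : ℚ))
          + w 2 * (4 - ((2:Fin 4).val : ℚ)) + w 3 * (4 - ((3:Fin 4).val : ℚ)) :=
      Fin.sum_univ_four _
    have hexp : dot4 w ν = (((n:ℚ) + 4 - ((p.1 0 : Fin 4).val : ℚ))
          + ((n:ℚ) + 4 - ((p.1 1 : Fin 4).val : ℚ))
          + ((n:ℚ) + 4 - ((p.1 2 : Fin 4).val : ℚ))
          + ((n:ℚ) + 4 - ((p.1 3 : Fin 4).val : ℚ)))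
        - ∑ i : Fin 4, w i * (4 - (i.val : ℚ)) := by
      unfold dot4
      rw [Fin.sum_univ_four, hterm 0, hterm 1, hterm 2, hterm 3, hQ4]
      ring
    have hge : 2 * ((n : ℚ) + n) + 2 ≤ dot4 w ν := by
      rw [hexp]
      linarith [hσ, hQsum]
    rw [hsum] at hub
    linarith
  unfold PB4
  rw [hempty, Set.ncard_empty]

-- ===== triangle counting =====

def tcz (k : ℤ) : ℕ := if k < 0 then 0 else (k.toNat + 1) * (k.toNat + 2) / 2

lemma card_tri_nat (K : ℕ) : {cd : ℕ × ℕ | cd.1 + cd.2 ≤ K}.ncard = (K + 1) * (K + 2) / 2 := by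
  classical
  set F : Finset (ℕ × ℕ) := (Finset.range (K + 1)).biUnion (fun j => Finset.HasAntidiagonal.antidiagonal j) with hF
  have hset : {cd : ℕ × ℕ | cd.1 + cd.2 ≤ K} = ↑F := by
    ext cd
    simp only [Set.mem_setOf_eq, hF, Finset.coe_biUnion, Set.mem_iUnion, Finset.mem_coe,
      Finset.mem_range, Finset.HasAntidiagonal.mem_antidiagonal, Nat.lt_succ_iff]
    constructor
    · intro h; exact ⟨cd.1 + cd.2, h, rfl⟩
    · rintro ⟨j, hj, rfl⟩; exact hj
  rw [hset, Set.ncard_coe_finset]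
  have hdisj : ∀ x ∈ Finset.range (K + 1), ∀ y ∈ Finset.range (K + 1), x ≠ y →
      Disjoint (Finset.HasAntidiagonal.antidiagonal x) (Finset.HasAntidiagonal.antidiagonal y) := by
    intro x _ y _ hxy
    rw [Finset.disjoint_left]
    intro a ha hb
    rw [Finset.HasAntidiagonal.mem_antidiagonal] at ha hb
    exact hxy (ha ▸ hb ▸ rfl)
  rw [hF, Finset.card_biUnion hdisj]
  have : ∀ j ∈ Finset.range (K + 1), (Finset.HasAntidiagonal.antidiagonal j).card = j + 1 := by
    intro j _; exact Finset.Nat.card_antidiagonal j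
  rw [Finset.sum_congr rfl this]
  have hs1 : ∑ j ∈ Finset.range (K+1), (j+1) = (∑ j ∈ Finset.range (K+1), j) + (K+1) := by
    rw [Finset.sum_add_distrib, Finset.sum_const, Finset.card_range, smul_eq_mul, mul_one]
  have hs2 := Finset.sum_range_id_mul_two (K+2)
  have hs3 : ∑ j ∈ Finset.range (K+2), j = (∑ j ∈ Finset.range (K+1), j) + (K+1) :=
    Finset.sum_range_succ _ _
  rw [hs3] at hs2
  have hkk : (K+2) * (K+2-1) = (K+1) * (K+2) := by
    have h1 : K + 2 - 1 = K + 1 := rfl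
    rw [h1]; ring
  have hT : (∑ j ∈ Finset.range (K+1), (j+1)) * 2 = (K+1) * (K+2) := by
    rw [hs1]
    omega
  symm
  exact Nat.div_eq_of_eq_mul_left (by norm_num) hT.symm

lemma card_tri (A B M : ℤ) :
    {ab : ℕ × ℕ | A ≤ (ab.1 : ℤ) ∧ B ≤ (ab.2 : ℤ) ∧ (ab.1 : ℤ) + (ab.2 : ℤ) ≤ M}.ncard
      = tcz (M - max A 0 - max B 0) := by
  set A' := A.toNat with hA'
  set B' := B.toNat with hB'
  have hmaxA : (A'.cast : ℤ) = max A 0 := Int.toNat_eq_max A ▸ rfl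
  have hmaxB : (B'.cast : ℤ) = max B 0 := Int.toNat_eq_max B ▸ rfl
  by_cases hK : M - A' - B' < 0
  · have hempty : {ab : ℕ × ℕ | A ≤ (ab.1 : ℤ) ∧ B ≤ (ab.2 : ℤ) ∧ (ab.1 : ℤ) + (ab.2 : ℤ) ≤ M} = ∅ := by
      rw [Set.eq_empty_iff_forall_notMem]
      rintro ⟨a, b⟩ ⟨h1, h2, h3⟩
      simp only at h1 h2 h3
      omega
    rw [hempty, Set.ncard_empty, tcz, if_pos (by omega)]
  · push_neg at hK
    set K := (M - A' - B').toNat with hKdef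
    have hKval : (K : ℤ) = M - A' - B' := by omega
    have hinj : Function.Injective (fun cd : ℕ × ℕ => (cd.1 + A', cd.2 + B')) := by
      rintro ⟨c, d⟩ ⟨c', d'⟩ h
      simp only [Prod.mk.injEq] at h
      exact Prod.ext (by omega) (by omega)
    have himg : {ab : ℕ × ℕ | A ≤ (ab.1 : ℤ) ∧ B ≤ (ab.2 : ℤ) ∧ (ab.1 : ℤ) + (ab.2 : ℤ) ≤ M}
        = (fun cd : ℕ × ℕ => (cd.1 + A', cd.2 + B')) '' {cd : ℕ × ℕ | cd.1 + cd.2 ≤ K} := by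
      ext ⟨a, b⟩
      simp only [Set.mem_setOf_eq, Set.mem_image, Prod.mk.injEq, Prod.exists]
      constructor
      · rintro ⟨h1, h2, h3⟩
        exact ⟨a - A', b - B', by omega, by omega, by omega⟩
      · rintro ⟨c, d, hcd, rfl, rfl⟩
        refine ⟨by omega, by omega, by omega⟩
    rw [himg, Set.ncard_image_of_injective _ hinj, card_tri_nat]
    have heq : M - max A 0 - max B 0 = (K : ℤ) := by omega
    rw [heq, tcz, if_neg (by omega), Int.toNat_natCast]

-- ===== the pair roots =====

def r01 : V4 := e4 0 + e4 1
def r02 : V4 := e4 0 + e4 2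
def r03 : V4 := e4 0 + e4 3
def r12 : V4 := e4 1 + e4 2
def r13 : V4 := e4 1 + e4 3
def r23 : V4 := e4 2 + e4 3

def pairL : List V4 := [r01, r02, r03, r12, r13, r23]

lemma nodupPair : pairL.Nodup := by
  have h : (pairL.map Ev).Nodup := by
    simp [pairL, Ev, r01, r02, r03, r12, r13, r23, e4, Pi.single_apply, List.nodup_cons, List.mem_cons]
    norm_num
  exact h.of_map Ev

def pairF : Finset V4 := ⟨(pairL : Multiset V4), nodupPair⟩

lemma mem_pairF {x : V4} : x ∈ pairF ↔
    x = r01 ∨ x = r02 ∨ x = r03 ∨ x = r12 ∨ x = r13 ∨ x = r23 := by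
  simp [pairF, pairL, Finset.mem_mk, List.mem_cons]

lemma pairF_subset_posB4 : ∀ x ∈ pairF, x ∈ posB4 := by
  intro x hx
  rcases mem_pairF.1 hx with rfl|rfl|rfl|rfl|rfl|rfl <;>
    simp [posB4, r01, r02, r03, r12, r13, r23, Finset.mem_insert, Finset.mem_singleton]

lemma sum_pairF {M : Type*} [AddCommMonoid M] (f : V4 → M) :
    ∑ x ∈ pairF, f x = f r01 + f r02 + f r03 + f r12 + f r13 + f r23 := by
  show (Multiset.map f (pairL : Multiset V4)).sum = _
  rw [Multiset.map_coe, Multiset.sum_coe]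
  simp [pairL]
  abel

lemma msum_apply (m : Multiset V4) (i : Fin 4) : m.sum i = (m.map (fun x => x i)).sum := by
  induction m using Multiset.induction with
  | empty => simp
  | cons a s ih => simp [Multiset.sum_cons, ih]

lemma map_sub_sum (m : Multiset V4) (f : V4 → ℚ) :
    (m.map (fun x => 2 - f x)).sum = 2 * (Multiset.card m : ℚ) - (m.map f).sum := by
  induction m using Multiset.induction with
  | empty => simp
  | cons a s ih => simp [Multiset.sum_cons, ih]; ring

lemma perm_val_sum (σ : Equiv.Perm (Fin 4)) :
    (σ 0).val + (σ 1).val + (σ 2).val + (σ 3).val = 6 := by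
  have := Equiv.sum_comp σ (fun j : Fin 4 => (j.val : ℕ))
  rw [Fin.sum_univ_four, Fin.sum_univ_four] at this
  rw [show ((0:Fin 4).val) = 0 from rfl, show ((1:Fin 4).val) = 1 from rfl,
    show ((2:Fin 4).val) = 2 from rfl, show ((3:Fin 4).val) = 3 from rfl] at this
  omega

lemma r01_0 : r01 (0:Fin 4) = 1 := by simp [r01, e4, Pi.single_apply]
lemma r01_1 : r01 (1:Fin 4) = 1 := by simp [r01, e4, Pi.single_apply]
lemma r01_2 : r01 (2:Fin 4) = 0 := by simp [r01, e4, Pi.single_apply]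
lemma r01_3 : r01 (3:Fin 4) = 0 := by simp [r01, e4, Pi.single_apply]
lemma r02_0 : r02 (0:Fin 4) = 1 := by simp [r02, e4, Pi.single_apply]
lemma r02_1 : r02 (1:Fin 4) = 0 := by simp [r02, e4, Pi.single_apply]
lemma r02_2 : r02 (2:Fin 4) = 1 := by simp [r02, e4, Pi.single_apply]
lemma r02_3 : r02 (3:Fin 4) = 0 := by simp [r02, e4, Pi.single_apply]
lemma r03_0 : r03 (0:Fin 4) = 1 := by simp [r03, e4, Pi.single_apply]
lemma r03_1 : r03 (1:Fin 4) = 0 := by simp [r03, e4, Pi.single_apply]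
lemma r03_2 : r03 (2:Fin 4) = 0 := by simp [r03, e4, Pi.single_apply]
lemma r03_3 : r03 (3:Fin 4) = 1 := by simp [r03, e4, Pi.single_apply]
lemma r12_0 : r12 (0:Fin 4) = 0 := by simp [r12, e4, Pi.single_apply]
lemma r12_1 : r12 (1:Fin 4) = 1 := by simp [r12, e4, Pi.single_apply]
lemma r12_2 : r12 (2:Fin 4) = 1 := by simp [r12, e4, Pi.single_apply]
lemma r12_3 : r12 (3:Fin 4) = 0 := by simp [r12, e4, Pi.single_apply]
lemma r13_0 : r13 (0:Fin 4) = 0 := by simp [r13, e4, Pi.single_apply]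
lemma r13_1 : r13 (1:Fin 4) = 1 := by simp [r13, e4, Pi.single_apply]
lemma r13_2 : r13 (2:Fin 4) = 0 := by simp [r13, e4, Pi.single_apply]
lemma r13_3 : r13 (3:Fin 4) = 1 := by simp [r13, e4, Pi.single_apply]
lemma r23_0 : r23 (0:Fin 4) = 0 := by simp [r23, e4, Pi.single_apply]
lemma r23_1 : r23 (1:Fin 4) = 0 := by simp [r23, e4, Pi.single_apply]
lemma r23_2 : r23 (2:Fin 4) = 1 := by simp [r23, e4, Pi.single_apply]
lemma r23_3 : r23 (3:Fin 4) = 1 := by simp [r23, e4, Pi.single_apply]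

lemma fv0 : ((0:Fin 4).val) = 0 := rfl
lemma fv1 : ((1:Fin 4).val) = 1 := rfl
lemma fv2 : ((2:Fin 4).val) = 2 := rfl
lemma fv3 : ((3:Fin 4).val) = 3 := rfl

lemma counts_eqs (n : ℕ) (σ : Equiv.Perm (Fin 4)) (m : Multiset V4)
    (hcard : Multiset.card m = n + n) (hmem : ∀ x ∈ m, x ∈ posB4)
    (hsum : m.sum = fun i : Fin 4 => (n : ℚ) + (i.val : ℚ) - ((σ i).val : ℚ)) :
    (∀ x ∈ m, x ∈ pairF) ∧
    ((m.count r01 : ℤ) + m.count r02 + m.count r03 = (n : ℤ) - ((σ 0).val : ℤ)) ∧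
    ((m.count r01 : ℤ) + m.count r12 + m.count r13 = (n : ℤ) + 1 - ((σ 1).val : ℤ)) ∧
    ((m.count r02 : ℤ) + m.count r12 + m.count r23 = (n : ℤ) + 2 - ((σ 2).val : ℤ)) ∧
    ((m.count r03 : ℤ) + m.count r13 + m.count r23 = (n : ℤ) + 3 - ((σ 3).val : ℤ)) ∧
    ((m.count r01 : ℤ) + m.count r02 + m.count r03 + m.count r12 + m.count r13 + m.count r23
      = (n : ℤ) + n) := by
  classical
  set ones : V4 := fun _ => 1 with hones
  have hwones : ∀ i, ones i = 1 ∨ ones i = -1 := fun i => Or.inl rfl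
  have hq6 : ((σ 0).val : ℚ) + ((σ 1).val : ℚ) + ((σ 2).val : ℚ) + ((σ 3).val : ℚ) = 6 := by
    exact_mod_cast congrArg (fun k : ℕ => (k : ℚ)) (perm_val_sum σ)
  have hν4 : dot4 ones m.sum = 2 * ((n : ℚ) + n) := by
    rw [hsum]
    unfold dot4
    rw [Fin.sum_univ_four]
    simp only [hones, one_mul]
    rw [show ((0:Fin 4).val) = 0 from rfl, show ((1:Fin 4).val) = 1 from rfl,
      show ((2:Fin 4).val) = 2 from rfl, show ((3:Fin 4).val) = 3 from rfl]
    push_cast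
    linarith
  have helem : ∀ x ∈ m, dot4 ones x = 2 := by
    have hzero : (m.map (fun x => 2 - dot4 ones x)).sum = 0 := by
      rw [map_sub_sum m (fun x => dot4 ones x), ← dot4_msum, hν4, hcard]
      push_cast
      ring
    have hnn : ∀ q ∈ m.map (fun x => 2 - dot4 ones x), 0 ≤ q := by
      intro q hq
      obtain ⟨x, hx, rfl⟩ := Multiset.mem_map.1 hq
      linarith [dot4_root_le hwones (hmem x hx)]
    intro x hx
    have := msum_nonneg_zero _ hnn hzero (2 - dot4 ones x)
      (Multiset.mem_map_of_mem _ hx)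
    linarith
  have hpair : ∀ x ∈ m, x ∈ pairF := by
    intro x hx
    rw [mem_pairF]
    have := root_eq2_pair (hmem x hx) (helem x hx)
    simpa [r01, r02, r03, r12, r13, r23] using this
  have hsub : m.toFinset ⊆ pairF := fun x hx => hpair x (Multiset.mem_toFinset.1 hx)
  have hcoord : ∀ i : Fin 4, (n : ℚ) + (i.val : ℚ) - ((σ i).val : ℚ)
      = (m.count r01 : ℚ) * r01 i + (m.count r02 : ℚ) * r02 i + (m.count r03 : ℚ) * r03 i
        + (m.count r12 : ℚ) * r12 i + (m.count r13 : ℚ) * r13 i + (m.count r23 : ℚ) * r23 i := by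
    intro i
    have h1 : m.sum i = (m.map (fun x => x i)).sum := msum_apply m i
    rw [hsum] at h1
    rw [Finset.sum_multiset_map_count] at h1
    have h2 : ∑ x ∈ m.toFinset, m.count x • x i = ∑ x ∈ pairF, m.count x • x i := by
      refine Finset.sum_subset hsub ?_
      intro x _ hx
      rw [Multiset.count_eq_zero_of_notMem (fun hxm => hx (Multiset.mem_toFinset.2 hxm))]
      simp
    rw [h2, sum_pairF (fun x => m.count x • x i)] at h1
    simpa [nsmul_eq_mul] using h1
  refine ⟨hpair, ?_, ?_, ?_, ?_, ?_⟩
  · have h := hcoord 0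
    simp only [r01_0, r01_1, r01_2, r01_3, r02_0, r02_1, r02_2, r02_3, r03_0, r03_1, r03_2, r03_3, r12_0, r12_1, r12_2, r12_3, r13_0, r13_1, r13_2, r13_3, r23_0, r23_1, r23_2, r23_3, mul_one, mul_zero, add_zero, zero_add, fv0, fv1, fv2, fv3] at h
    push_cast at h
    have hq : (((m.count r01 : ℤ) + m.count r02 + m.count r03 : ℤ) : ℚ)
        = (((n : ℤ) - ((σ 0).val : ℤ) : ℤ) : ℚ) := by push_cast; linarith
    exact_mod_cast hq
  · have h := hcoord 1
    simp only [r01_0, r01_1, r01_2, r01_3, r02_0, r02_1, r02_2, r02_3, r03_0, r03_1, r03_2, r03_3, r12_0, r12_1, r12_2, r12_3, r13_0, r13_1, r13_2, r13_3, r23_0, r23_1, r23_2, r23_3, mul_one, mul_zero, add_zero, zero_add, fv0, fv1, fv2, fv3] at h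
    push_cast at h
    have hq : (((m.count r01 : ℤ) + m.count r12 + m.count r13 : ℤ) : ℚ)
        = (((n : ℤ) + 1 - ((σ 1).val : ℤ) : ℤ) : ℚ) := by push_cast; linarith
    exact_mod_cast hq
  · have h := hcoord 2
    simp only [r01_0, r01_1, r01_2, r01_3, r02_0, r02_1, r02_2, r02_3, r03_0, r03_1, r03_2, r03_3, r12_0, r12_1, r12_2, r12_3, r13_0, r13_1, r13_2, r13_3, r23_0, r23_1, r23_2, r23_3, mul_one, mul_zero, add_zero, zero_add, fv0, fv1, fv2, fv3] at h
    push_cast at h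
    have hq : (((m.count r02 : ℤ) + m.count r12 + m.count r23 : ℤ) : ℚ)
        = (((n : ℤ) + 2 - ((σ 2).val : ℤ) : ℤ) : ℚ) := by push_cast; linarith
    exact_mod_cast hq
  · have h := hcoord 3
    simp only [r01_0, r01_1, r01_2, r01_3, r02_0, r02_1, r02_2, r02_3, r03_0, r03_1, r03_2, r03_3, r12_0, r12_1, r12_2, r12_3, r13_0, r13_1, r13_2, r13_3, r23_0, r23_1, r23_2, r23_3, mul_one, mul_zero, add_zero, zero_add, fv0, fv1, fv2, fv3] at h
    push_cast at h
    have hq : (((m.count r03 : ℤ) + m.count r13 + m.count r23 : ℤ) : ℚ)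
        = (((n : ℤ) + 3 - ((σ 3).val : ℤ) : ℤ) : ℚ) := by push_cast; linarith
    exact_mod_cast hq
  · have h1 := Multiset.toFinset_sum_count_eq m
    have h2 : ∑ x ∈ m.toFinset, m.count x = ∑ x ∈ pairF, m.count x := by
      refine Finset.sum_subset hsub ?_
      intro x _ hx
      exact Multiset.count_eq_zero_of_notMem (fun hxm => hx (Multiset.mem_toFinset.2 hxm))
    rw [h2, sum_pairF (fun x => m.count x), hcard] at h1
    exact_mod_cast h1

-- pairwise distinctness needed for counts
lemma funext4 {f g : V4} (h0 : f 0 = g 0) (h1 : f 1 = g 1) (h2 : f 2 = g 2) (h3 : f 3 = g 3) :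
    f = g := by
  funext i; fin_cases i; exacts [h0, h1, h2, h3]

lemma ne_r01_r02 : r01 ≠ r02 := by intro h; have := congrFun h 1; rw [r01_1, r02_1] at this; norm_num at this
lemma ne_r01_r03 : r01 ≠ r03 := by intro h; have := congrFun h 1; rw [r01_1, r03_1] at this; norm_num at this
lemma ne_r01_r12 : r01 ≠ r12 := by intro h; have := congrFun h 0; rw [r01_0, r12_0] at this; norm_num at this
lemma ne_r01_r13 : r01 ≠ r13 := by intro h; have := congrFun h 0; rw [r01_0, r13_0] at this; norm_num at this
lemma ne_r01_r23 : r01 ≠ r23 := by intro h; have := congrFun h 0; rw [r01_0, r23_0] at this; norm_num at this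
lemma ne_r02_r01 : r02 ≠ r01 := ne_r01_r02.symm
lemma ne_r02_r03 : r02 ≠ r03 := by intro h; have := congrFun h 2; rw [r02_2, r03_2] at this; norm_num at this
lemma ne_r02_r12 : r02 ≠ r12 := by intro h; have := congrFun h 0; rw [r02_0, r12_0] at this; norm_num at this
lemma ne_r02_r13 : r02 ≠ r13 := by intro h; have := congrFun h 0; rw [r02_0, r13_0] at this; norm_num at this
lemma ne_r02_r23 : r02 ≠ r23 := by intro h; have := congrFun h 0; rw [r02_0, r23_0] at this; norm_num at this

def D (σ : Equiv.Perm (Fin 4)) : ℤ :=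
  max (3 - ((σ 3).val : ℤ)) ((σ 0).val : ℤ)
    + max (((σ 3).val : ℤ) + ((σ 2).val : ℤ) - 5) 0
    + max (((σ 3).val : ℤ) + ((σ 1).val : ℤ) - 4) 0

lemma PB4_perm (n : ℕ) (σ : Equiv.Perm (Fin 4)) :
    PB4 (n + n) (fun i : Fin 4 => (n : ℚ) + (i.val : ℚ) - ((σ i).val : ℚ))
      = tcz ((n : ℤ) - D σ) := by
  classical
  set ν : V4 := fun i : Fin 4 => (n : ℚ) + (i.val : ℚ) - ((σ i).val : ℚ) with hν
  set S : Set (Multiset V4) :=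
    {m | Multiset.card m = n + n ∧ (∀ x ∈ m, x ∈ posB4) ∧ m.sum = ν} with hS
  have h6 : (σ 0).val + (σ 1).val + (σ 2).val + (σ 3).val = 6 := perm_val_sum σ
  set s0 : ℤ := (n : ℤ) - 3 + ((σ 3).val : ℤ) with hs0
  set A : ℤ := s0 - ((n : ℤ) + 2 - ((σ 2).val : ℤ)) with hA
  set B : ℤ := s0 - ((n : ℤ) + 1 - ((σ 1).val : ℤ)) with hB
  set M : ℤ := min s0 ((n : ℤ) - ((σ 0).val : ℤ)) with hM
  have hF : Set.InjOn (fun m : Multiset V4 => (m.count r01, m.count r02)) S := by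
    rintro m ⟨hc, hmm, hs⟩ m' ⟨hc', hmm', hs'⟩ hFeq
    obtain ⟨hp, e0, e1, e2, e3, eC⟩ := counts_eqs n σ m hc hmm (hs.trans hν)
    obtain ⟨hp', e0', e1', e2', e3', eC'⟩ := counts_eqs n σ m' hc' hmm' (hs'.trans hν)
    simp only [Prod.mk.injEq] at hFeq
    obtain ⟨ha, hb⟩ := hFeq
    apply Multiset.ext.2
    intro x
    by_cases hx : x ∈ pairF
    · rcases mem_pairF.1 hx with rfl | rfl | rfl | rfl | rfl | rfl <;> omega
    · rw [Multiset.count_eq_zero_of_notMem (fun h => hx (hp x h)),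
        Multiset.count_eq_zero_of_notMem (fun h => hx (hp' x h))]
  have himg : (fun m : Multiset V4 => (m.count r01, m.count r02)) '' S
      = {ab : ℕ × ℕ | A ≤ (ab.1 : ℤ) ∧ B ≤ (ab.2 : ℤ) ∧ (ab.1 : ℤ) + (ab.2 : ℤ) ≤ M} := by
    ext ⟨a, b⟩
    simp only [Set.mem_image, Set.mem_setOf_eq, Prod.mk.injEq]
    constructor
    · rintro ⟨m, ⟨hc, hmm, hs⟩, ha, hb⟩
      obtain ⟨hp, e0, e1, e2, e3, eC⟩ := counts_eqs n σ m hc hmm (hs.trans hν)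
      refine ⟨by omega, by omega, by omega⟩
    · rintro ⟨h1, h2, h3⟩
      set u := ((n : ℤ) - ((σ 0).val : ℤ) - a - b).toNat with hu
      set t := (s0 - a - b).toNat with ht
      set v := ((n : ℤ) + 1 - ((σ 1).val : ℤ) - s0 + b).toNat with hv
      set w := ((n : ℤ) + 2 - ((σ 2).val : ℤ) - s0 + a).toNat with hw
      have hu' : (u : ℤ) = (n : ℤ) - ((σ 0).val : ℤ) - a - b := by omega
      have ht' : (t : ℤ) = s0 - a - b := by omega
      have hv' : (v : ℤ) = (n : ℤ) + 1 - ((σ 1).val : ℤ) - s0 + b := by omega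
      have hw' : (w : ℤ) = (n : ℤ) + 2 - ((σ 2).val : ℤ) - s0 + a := by omega
      refine ⟨(a • {r01} : Multiset V4) + b • {r02} + u • {r03} + t • {r12} + v • {r13}
        + w • {r23}, ⟨?_, ?_, ?_⟩, ?_, ?_⟩
      · simp only [Multiset.card_add, Multiset.card_nsmul, Multiset.card_singleton]
        omega
      · intro x hx
        simp only [Multiset.mem_add] at hx
        rcases hx with (((((h | h) | h) | h) | h) | h) <;>
          rw [Multiset.nsmul_singleton] at h <;>
          (have hh := Multiset.eq_of_mem_replicate h; subst hh) <;>
          (apply pairF_subset_posB4; rw [mem_pairF]; tauto)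
      · have hseq : ((a • {r01} : Multiset V4) + b • {r02} + u • {r03} + t • {r12} + v • {r13}
            + w • {r23}).sum = (a : ℕ) • r01 + b • r02 + u • r03 + t • r12 + v • r13 + w • r23 := by
          simp [Multiset.sum_add, Multiset.nsmul_singleton, Multiset.sum_replicate]
        rw [hseq, hν]
        have hqu : (u : ℚ) = (n : ℚ) - ((σ 0).val : ℚ) - a - b := by exact_mod_cast hu'
        have hqt : (t : ℚ) = ((n : ℚ) - 3 + ((σ 3).val : ℚ)) - a - b := by
          rw [hs0] at ht'; exact_mod_cast ht'
        have hqv : (v : ℚ) = (n : ℚ) + 1 - ((σ 1).val : ℚ) - ((n : ℚ) - 3 + ((σ 3).val : ℚ)) + b := by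
          rw [hs0] at hv'; exact_mod_cast hv'
        have hqw : (w : ℚ) = (n : ℚ) + 2 - ((σ 2).val : ℚ) - ((n : ℚ) - 3 + ((σ 3).val : ℚ)) + a := by
          rw [hs0] at hw'; exact_mod_cast hw'
        have hq6 : ((σ 0).val : ℚ) + ((σ 1).val : ℚ) + ((σ 2).val : ℚ) + ((σ 3).val : ℚ) = 6 := by
          exact_mod_cast congrArg (fun k : ℕ => (k : ℚ)) h6
        apply funext4 <;>
          simp only [Pi.add_apply, Pi.smul_apply, nsmul_eq_mul, Pi.mul_apply, Pi.natCast_apply,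
            r01_0, r01_1, r01_2, r01_3, r02_0, r02_1, r02_2, r02_3, r03_0, r03_1, r03_2, r03_3,
            r12_0, r12_1, r12_2, r12_3, r13_0, r13_1, r13_2, r13_3, r23_0, r23_1, r23_2, r23_3,
            mul_one, mul_zero, add_zero, zero_add, fv0, fv1, fv2, fv3] <;>
          push_cast <;> linarith
      · simp [Multiset.count_add, Multiset.count_nsmul, Multiset.count_singleton,
          ne_r01_r02, ne_r01_r03, ne_r01_r12, ne_r01_r13, ne_r01_r23]
      · simp [Multiset.count_add, Multiset.count_nsmul, Multiset.count_singleton,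
          ne_r02_r01, ne_r02_r03, ne_r02_r12, ne_r02_r13, ne_r02_r23]
  have hP : PB4 (n + n) ν = S.ncard := rfl
  rw [hP, ← Set.ncard_image_of_injOn hF, himg, card_tri]
  congr 1
  rw [hA, hB, hM, hs0]
  unfold D
  omega

-- ===== final arithmetic =====

lemma tcz_mul_two : ∀ k : ℤ, 0 ≤ k → (tcz k : ℤ) * 2 = (k + 1) * (k + 2) := by
  intro k hk
  rw [tcz, if_neg (by omega)]
  have h2 : ((k.toNat + 1) * (k.toNat + 2)) / 2 * 2 = (k.toNat + 1) * (k.toNat + 2) := by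
    refine Nat.div_mul_cancel ?_
    have := Nat.even_mul_succ_self (k.toNat + 1)
    have h3 : (k.toNat + 1) * (k.toNat + 1 + 1) = (k.toNat + 1) * (k.toNat + 2) := by ring
    rw [h3] at this
    exact this.two_dvd
  have hcast : (k.toNat : ℤ) = k := Int.toNat_of_nonneg hk
  calc ((((k.toNat + 1) * (k.toNat + 2) / 2 : ℕ)) : ℤ) * 2
      = (((k.toNat + 1) * (k.toNat + 2) / 2 * 2 : ℕ) : ℤ) := by push_cast; ring
    _ = (((k.toNat + 1) * (k.toNat + 2) : ℕ) : ℤ) := by rw [h2]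
    _ = (k + 1) * (k + 2) := by push_cast; rw [hcast]

lemma tcz_id (n : ℕ) :
    (tcz (n : ℤ) : ℤ) - 2 * (tcz ((n : ℤ) - 1) : ℤ) + (tcz ((n : ℤ) - 2) : ℤ) = 1 := by
  rcases Nat.lt_or_ge n 2 with h | h
  · interval_cases n <;> decide
  · have h0 : (0:ℤ) ≤ (n : ℤ) := by positivity
    have h1 : (0:ℤ) ≤ (n : ℤ) - 1 := by omega
    have h2 : (0:ℤ) ≤ (n : ℤ) - 2 := by omega
    have k0 := tcz_mul_two _ h0
    have k1 := tcz_mul_two _ h1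
    have k2 := tcz_mul_two _ h2
    have hr : ((n:ℤ) + 1) * ((n:ℤ) + 2) - 2 * (((n:ℤ) - 1 + 1) * ((n:ℤ) - 1 + 2))
        + (((n:ℤ) - 2 + 1) * ((n:ℤ) - 2 + 2)) = 2 := by ring
    linarith

lemma D_mem : ∀ σ : Equiv.Perm (Fin 4), D σ ∈ ({0, 1, 2, 3} : Finset ℤ) := by decide

lemma coeff0 : (∑ σ : Equiv.Perm (Fin 4),
    (if D σ = 0 then ((Equiv.Perm.sign σ : ℤˣ) : ℤ) else 0)) = 1 := by decide

lemma coeff1 : (∑ σ : Equiv.Perm (Fin 4),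
    (if D σ = 1 then ((Equiv.Perm.sign σ : ℤˣ) : ℤ) else 0)) = -2 := by decide

lemma coeff2 : (∑ σ : Equiv.Perm (Fin 4),
    (if D σ = 2 then ((Equiv.Perm.sign σ : ℤˣ) : ℤ) else 0)) = 1 := by decide

lemma coeff3 : (∑ σ : Equiv.Perm (Fin 4),
    (if D σ = 3 then ((Equiv.Perm.sign σ : ℤˣ) : ℤ) else 0)) = 0 := by decide

theorem statement13 (W : Finset (V4 → V4))
    (hW : ∀ u, u ∈ W ↔ ∃ l : List (Fin 4), u = compB4 l)
    (m : ℕ) (hm : Even m) :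
    ∑ u ∈ W, (-1 : ℤ) ^ lenB4 u *
      (PB4 m (u (((m : ℚ) + 1) • ω4 + ρ4) - ρ4 - ω4) : ℤ) = 1 := by
  classical
  obtain ⟨n, rfl⟩ := hm
  rw [W_eq W hW, Finset.sum_image (fun p _ q _ h => act_inj h)]
  have hterm : ∀ p : SP,
      (-1:ℤ) ^ lenB4 (act p)
        * (PB4 (n + n) (act p ((((n + n : ℕ) : ℚ) + 1) • ω4 + ρ4) - ρ4 - ω4) : ℤ)
      = if p.2 = (fun _ => false)
          then ((Equiv.Perm.sign p.1 : ℤˣ) : ℤ) * (tcz ((n : ℤ) - D p.1) : ℤ) else 0 := by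
    intro p
    rw [len_eps, arg_eq]
    by_cases hcase : p.2 = (fun _ => false)
    · rw [if_pos hcase]
      have hshape : (fun i : Fin 4 => sg (p.2 i) * ((n:ℚ) + 4 - ((p.1 i).val : ℚ)) - (4 - (i.val : ℚ)))
          = (fun i : Fin 4 => (n : ℚ) + (i.val : ℚ) - ((p.1 i).val : ℚ)) := by
        funext i
        rw [hcase]
        simp only [sg, if_neg Bool.false_ne_true]
        ring
      rw [hshape, PB4_perm]
      have heps : eps p = ((Equiv.Perm.sign p.1 : ℤˣ) : ℤ) := by
        simp [eps, hcase]
      rw [heps]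
    · rw [if_neg hcase]
      obtain ⟨i0, hi0⟩ : ∃ i, p.2 i = true := by
        by_contra hc
        push_neg at hc
        exact hcase (funext fun i => by simpa using hc i)
      rw [PB4_flip n p i0 hi0]
      simp
  rw [Finset.sum_congr rfl (fun p _ => hterm p), Fintype.sum_prod_type]
  have hinner : ∀ σ : Equiv.Perm (Fin 4),
      (∑ ε : Fin 4 → Bool, if ε = (fun _ => false)
          then ((Equiv.Perm.sign σ : ℤˣ) : ℤ) * (tcz ((n : ℤ) - D σ) : ℤ) else 0)
      = ((Equiv.Perm.sign σ : ℤˣ) : ℤ) * (tcz ((n : ℤ) - D σ) : ℤ) := by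
    intro σ
    rw [Finset.sum_ite_eq' Finset.univ (fun _ => false)
      (fun _ => ((Equiv.Perm.sign σ : ℤˣ) : ℤ) * (tcz ((n : ℤ) - D σ) : ℤ))]
    simp
  rw [Finset.sum_congr rfl (fun σ _ => hinner σ)]
  have hstep : ∀ σ : Equiv.Perm (Fin 4),
      ((Equiv.Perm.sign σ : ℤˣ) : ℤ) * (tcz ((n : ℤ) - D σ) : ℤ)
      = ∑ j ∈ ({0, 1, 2, 3} : Finset ℤ),
          (if D σ = j then ((Equiv.Perm.sign σ : ℤˣ) : ℤ) else 0) * (tcz ((n : ℤ) - j) : ℤ) := by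
    intro σ
    have h1 : ∀ j : ℤ,
        (if D σ = j then ((Equiv.Perm.sign σ : ℤˣ) : ℤ) else 0) * (tcz ((n : ℤ) - j) : ℤ)
        = if D σ = j then ((Equiv.Perm.sign σ : ℤˣ) : ℤ) * (tcz ((n : ℤ) - j) : ℤ) else 0 := by
      intro j; split <;> ring
    rw [Finset.sum_congr rfl (fun j _ => h1 j),
      Finset.sum_ite_eq ({0, 1, 2, 3} : Finset ℤ) (D σ)
        (fun j => ((Equiv.Perm.sign σ : ℤˣ) : ℤ) * (tcz ((n : ℤ) - j) : ℤ)),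
      if_pos (D_mem σ)]
  rw [Finset.sum_congr rfl (fun σ _ => hstep σ), Finset.sum_comm]
  have hpull : ∀ j ∈ ({0, 1, 2, 3} : Finset ℤ),
      (∑ σ : Equiv.Perm (Fin 4),
        (if D σ = j then ((Equiv.Perm.sign σ : ℤˣ) : ℤ) else 0) * (tcz ((n : ℤ) - j) : ℤ))
      = (∑ σ : Equiv.Perm (Fin 4), (if D σ = j then ((Equiv.Perm.sign σ : ℤˣ) : ℤ) else 0))
          * (tcz ((n : ℤ) - j) : ℤ) := by
    intro j _
    rw [Finset.sum_mul]
  rw [Finset.sum_congr rfl hpull]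
  have e0 : (0:ℤ) ∉ ({1, 2, 3} : Finset ℤ) := by decide
  have e1 : (1:ℤ) ∉ ({2, 3} : Finset ℤ) := by decide
  have e2 : (2:ℤ) ∉ ({3} : Finset ℤ) := by decide
  rw [show ({0, 1, 2, 3} : Finset ℤ) = insert 0 (insert 1 (insert 2 ({3} : Finset ℤ))) from rfl,
    Finset.sum_insert e0, Finset.sum_insert e1, Finset.sum_insert e2, Finset.sum_singleton,
    coeff0, coeff1, coeff2, coeff3]
  have := tcz_id n
  rw [sub_zero] at *
  linarith


end
end

section
/- Let Φ be of type G₂ with simple roots α₁ (short) and α₂ (long), and let P_k(ν) count expressions of ν as a sum of exactly k positive roots. Let λ = aω₁ + bω₂ with a ≥ 3 and 0 ≤ b ≤ 2. Then for all k ≤ a + b − 2, P_k(λ − ω₁) = P_k(s₂·λ − ω₁), where s₂ is the simple reflection in α₂ and · the dot action. -/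
noncomputable section

/-- the weight space of `G₂`, in coordinates with respect to the simple roots `α₁, α₂`
(`α₁` short) -/
abbrev VG := Fin 2 → ℚ

/-- The six positive roots of `G₂`: `α₁, α₂, α₁+α₂, 2α₁+α₂, 3α₁+α₂, 3α₁+2α₂`. -/
def posG : Finset VG := {![1, 0], ![0, 1], ![1, 1], ![2, 1], ![3, 1], ![3, 2]}

/-- Kostant's partition function: the number of ways (as unordered multisets) to write `ν`
as a sum of exactly `k` positive roots. -/
def PG (k : ℕ) (ν : VG) : ℕ :=
  Set.ncard {m : Multiset VG | Multiset.card m = k ∧ (∀ x ∈ m, x ∈ posG) ∧ m.sum = ν}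

/-- the Cartan matrix of `G₂` (`α₁` short); the `(i,j)` entry is `⟨α_j, α_i^∨⟩` -/
def CG : Matrix (Fin 2) (Fin 2) ℚ := !![2, -3; -1, 2]

/-- the simple reflection `s_i` acting on the weight space:
`s_i(x) = x - ⟨x, α_i^∨⟩ α_i` -/
def sG (i : Fin 2) : VG → VG := fun x => x - (∑ j, x j * CG i j) • (Pi.single i 1 : VG)

/-- the fundamental weight `ω₁ = 2α₁ + α₂` -/
def ω₁G : VG := ![2, 1]

/-- the fundamental weight `ω₂ = 3α₁ + 2α₂` -/
def ω₂G : VG := ![3, 2]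

/-- the half-sum `ρ` of the positive roots -/
def ρG : VG := (2 : ℚ)⁻¹ • ∑ α ∈ posG, α

/- ## Auxiliary lemmas -/

lemma ρG_eq : ρG = ![5, 3] := by
  funext i; fin_cases i <;>
    norm_num [ρG, posG, Finset.sum_insert, Finset.mem_insert, Finset.mem_singleton,
      funext_iff, Fin.forall_fin_two]

lemma sum_map_le_count (f : VG → ℚ) (v : VG)
    (M : Multiset VG) (hM : ∀ x ∈ M, x ∈ posG)
    (hf : ∀ x ∈ posG, f x ≤ if x = v then 1 else 0) :
    (M.map f).sum ≤ M.count v := by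
  induction M using Multiset.induction_on with
  | empty => simp
  | cons a s ih =>
    have ha := hf a (hM a (Multiset.mem_cons_self a s))
    have hs := ih (fun x hx => hM x (Multiset.mem_cons_of_mem hx))
    rw [Multiset.map_cons, Multiset.sum_cons, Multiset.count_cons]
    by_cases h : a = v
    · rw [if_pos h] at ha; rw [if_pos h.symm]; push_cast; linarith
    · rw [if_neg h] at ha; rw [if_neg (fun hh => h hh.symm)]; push_cast; linarith

lemma sum_map_eval (g : VG → ℚ) (M : Multiset VG) :
    (M.map fun x => g x - 1).sum = (M.map g).sum - M.card := by
  induction M using Multiset.induction_on with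
  | empty => simp
  | cons a s ih => simp [ih]; ring

lemma sum_apply_eq (M : Multiset VG) (i : Fin 2) :
    M.sum i = (M.map (fun x => x i)).sum := by
  induction M using Multiset.induction_on with
  | empty => simp
  | cons a s ih => simp [ih]

/-- every decomposition of `ν` into `k` positive roots uses at least `ν 1 - k`
copies of the highest root `![3,2]` -/
lemma count32 (M : Multiset VG) (hM : ∀ x ∈ M, x ∈ posG) :
    M.sum 1 - M.card ≤ M.count ![3, 2] := by
  have h := sum_map_le_count (fun x => x 1 - 1) ![3, 2] M hM ?_
  · rwa [sum_map_eval (fun x => x 1), ← sum_apply_eq] at h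
  · intro x hx; fin_cases hx <;>
      norm_num [funext_iff, Fin.forall_fin_two]

/-- every decomposition of `ν` into `k` positive roots uses at least `ν 0 - ν 1 - k`
copies of the root `![3,1]` -/
lemma count31 (M : Multiset VG) (hM : ∀ x ∈ M, x ∈ posG) :
    M.sum 0 - M.sum 1 - M.card ≤ M.count ![3, 1] := by
  have h := sum_map_le_count (fun x => (x 0 - x 1) - 1) ![3, 1] M hM ?_
  · rw [sum_map_eval (fun x => x 0 - x 1)] at h
    have : (M.map fun x => x 0 - x 1).sum
        = (M.map (fun x => x 0)).sum - (M.map (fun x => x 1)).sum := by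
      induction M using Multiset.induction_on with
      | empty => simp
      | cons a s ih => simp [ih]; ring
    rw [this, ← sum_apply_eq, ← sum_apply_eq] at h
    linarith
  · intro x hx; fin_cases hx <;>
      norm_num [funext_iff, Fin.forall_fin_two]

/-- The key bijection: replacing `c` copies of `![3,2]` by `c` copies of `![3,1]`
gives a bijection between decompositions of `ν` and of `ν - c • ![0,1]` into `k`
positive roots, provided `c ≤ ν 1 - k` and `c ≤ ν' 0 - ν' 1 - k`. -/
lemma PG_shift (k c : ℕ) (ν ν' : VG) (hν' : ν' = ν - (c : ℚ) • ![0, 1])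
    (h1 : (c : ℚ) ≤ ν 1 - k) (h2 : (c : ℚ) ≤ ν' 0 - ν' 1 - k) :
    PG k ν = PG k ν' := by
  classical
  set S : Set (Multiset VG) :=
    {m : Multiset VG | Multiset.card m = k ∧ (∀ x ∈ m, x ∈ posG) ∧ m.sum = ν} with hS
  set S' : Set (Multiset VG) :=
    {m : Multiset VG | Multiset.card m = k ∧ (∀ x ∈ m, x ∈ posG) ∧ m.sum = ν'} with hS'
  set R₂ : Multiset VG := Multiset.replicate c ![3, 2] with hR₂
  set R₁ : Multiset VG := Multiset.replicate c ![3, 1] with hR₁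
  have h31pos : (![3, 1] : VG) ∈ posG := by simp [posG]
  have h32pos : (![3, 2] : VG) ∈ posG := by simp [posG]
  have cardR₁ : R₁.card = c := Multiset.card_replicate _ _
  have cardR₂ : R₂.card = c := Multiset.card_replicate _ _
  have sumR₁ : R₁.sum = (c : ℕ) • (![3, 1] : VG) := by
    rw [hR₁, Multiset.sum_replicate]
  have sumR₂ : R₂.sum = (c : ℕ) • (![3, 2] : VG) := by
    rw [hR₂, Multiset.sum_replicate]
  set f : Multiset VG → Multiset VG := fun M => M - R₂ + R₁ with hf
  set g : Multiset VG → Multiset VG := fun M => M - R₁ + R₂ with hg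
  -- every member of S contains R₂
  have hle₂ : ∀ M ∈ S, R₂ ≤ M := by
    intro M hM
    obtain ⟨hc, hp, hs⟩ := hM
    have := count32 M hp
    rw [hs, hc] at this
    have hcount : (c : ℚ) ≤ (M.count ![3, 2] : ℚ) := le_trans h1 this
    have : c ≤ M.count ![3, 2] := by exact_mod_cast hcount
    exact Multiset.le_count_iff_replicate_le.mp this
  -- every member of S' contains R₁
  have hle₁ : ∀ M ∈ S', R₁ ≤ M := by
    intro M hM
    obtain ⟨hc, hp, hs⟩ := hM
    have := count31 M hp
    rw [hs, hc] at this
    have hcount : (c : ℚ) ≤ (M.count ![3, 1] : ℚ) := le_trans h2 this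
    have : c ≤ M.count ![3, 1] := by exact_mod_cast hcount
    exact Multiset.le_count_iff_replicate_le.mp this
  -- the weight difference
  have hdiff : (c : ℕ) • (![3, 2] : VG) - (c : ℕ) • (![3, 1] : VG) = (c : ℚ) • ![0, 1] := by
    funext i; fin_cases i <;> simp <;> ring
  have hmaps : ∀ M ∈ S, f M ∈ S' := by
    intro M hM
    have hle := hle₂ M hM
    obtain ⟨hc, hp, hs⟩ := hM
    refine ⟨?_, ?_, ?_⟩
    · rw [hf]
      simp only [Multiset.card_add, Multiset.card_sub hle, cardR₁, cardR₂, hc]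
      have : c ≤ k := by
        rw [← hc]; exact le_trans (le_of_eq cardR₂.symm) (Multiset.card_le_card hle)
      omega
    · intro x hx
      rcases Multiset.mem_add.mp hx with h | h
      · exact hp x (Multiset.mem_of_le (tsub_le_self) h)
      · rw [Multiset.eq_of_mem_replicate h]; exact h31pos
    · have hM' : (M - R₂) + R₂ = M := tsub_add_cancel_of_le hle
      have : (M - R₂).sum + R₂.sum = ν := by rw [← Multiset.sum_add, hM', hs]
      rw [hf]
      simp only [Multiset.sum_add, sumR₁]
      rw [hν']
      have h2' : (M - R₂).sum = ν - R₂.sum := by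
        rw [← this]; abel
      rw [h2', sumR₂]
      rw [← hdiff]; abel
  have hmaps' : ∀ M ∈ S', g M ∈ S := by
    intro M hM
    have hle := hle₁ M hM
    obtain ⟨hc, hp, hs⟩ := hM
    refine ⟨?_, ?_, ?_⟩
    · rw [hg]
      simp only [Multiset.card_add, Multiset.card_sub hle, cardR₁, cardR₂, hc]
      have : c ≤ k := by
        rw [← hc]; exact le_trans (le_of_eq cardR₁.symm) (Multiset.card_le_card hle)
      omega
    · intro x hx
      rcases Multiset.mem_add.mp hx with h | h
      · exact hp x (Multiset.mem_of_le (tsub_le_self) h)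
      · rw [Multiset.eq_of_mem_replicate h]; exact h32pos
    · have hM' : (M - R₁) + R₁ = M := tsub_add_cancel_of_le hle
      have : (M - R₁).sum + R₁.sum = ν' := by rw [← Multiset.sum_add, hM', hs]
      rw [hg]
      simp only [Multiset.sum_add, sumR₂]
      have h2' : (M - R₁).sum = ν' - R₁.sum := by rw [← this]; abel
      rw [h2', sumR₁, hν', ← hdiff]; abel
  have hinj : Set.InjOn f S := by
    intro M hM M' hM' heq
    have h1' := hle₂ M hM
    have h2' := hle₂ M' hM'
    rw [hf] at heq
    simp only at heq
    have : M - R₂ = M' - R₂ := add_right_cancel heq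
    calc M = (M - R₂) + R₂ := (tsub_add_cancel_of_le h1').symm
    _ = (M' - R₂) + R₂ := by rw [this]
    _ = M' := tsub_add_cancel_of_le h2'
  have himg : f '' S = S' := by
    apply Set.Subset.antisymm
    · rintro _ ⟨M, hM, rfl⟩; exact hmaps M hM
    · intro M hM
      refine ⟨g M, hmaps' M hM, ?_⟩
      have hle := hle₁ M hM
      show (M - R₁ + R₂) - R₂ + R₁ = M
      rw [add_tsub_cancel_right, tsub_add_cancel_of_le hle]
  show S.ncard = S'.ncard
  rw [← himg, Set.ncard_image_of_injOn hinj]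

-- For `λ = aω₁ + bω₂` with `a ≥ 3`, `0 ≤ b ≤ 2` and `k ≤ a + b - 2`:
-- `P_k(λ - ω₁) = P_k(s₂·λ - ω₁)`, where `·` is the dot action `u·λ = u(λ+ρ) - ρ`.
theorem statement14 (a b : ℕ) (ha : 3 ≤ a) (hb : b ≤ 2) (k : ℕ)
    (hk : (k : ℤ) ≤ (a : ℤ) + (b : ℤ) - 2) :
    PG k ((a : ℚ) • ω₁G + (b : ℚ) • ω₂G - ω₁G) =
      PG k (sG 1 ((a : ℚ) • ω₁G + (b : ℚ) • ω₂G + ρG) - ρG - ω₁G) := by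
  have hk' : (k : ℚ) ≤ (a : ℚ) + (b : ℚ) - 2 := by exact_mod_cast hk
  set ν : VG := (a : ℚ) • ω₁G + (b : ℚ) • ω₂G - ω₁G with hν
  have hν' : sG 1 ((a : ℚ) • ω₁G + (b : ℚ) • ω₂G + ρG) - ρG - ω₁G
      = ν - (((b + 1 : ℕ)) : ℚ) • ![0, 1] := by
    funext i; fin_cases i <;>
      · simp [hν, sG, CG, ω₁G, ω₂G, ρG_eq, Fin.sum_univ_two, Pi.single_apply,
          Matrix.vecHead, Matrix.vecTail]
        try (push_cast; ring)
  rw [hν']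
  apply PG_shift k (b + 1) ν _ rfl
  · simp [hν, ω₁G, ω₂G]
    push_cast
    linarith
  · simp [hν, ω₁G, ω₂G]
    push_cast
    linarith

end
end

section
/- Let Φ be of type G₂ and P_k Kostant's partition function. For every λ = aω₁ + bω₂ with a ≥ 1 and 0 ≤ b ≤ 2, ∑_{u ∈ W} (−1)^{ℓ(u)} P_{a+b−1}(u·λ − ω₁) = ⌈a/3⌉. -/
noncomputable section

/-- the composite of the simple reflections listed in `l` -/
def compG (l : List (Fin 2)) : VG → VG := (l.map sG).foldr (· ∘ ·) id

/-- the length of a Weyl group element: the minimal length of a word in the simple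
reflections representing it -/
def lenG (u : VG → VG) : ℕ := sInf {m | ∃ l : List (Fin 2), l.length = m ∧ u = compG l}

-- For `λ = aω₁ + bω₂` with `a ≥ 1`, `0 ≤ b ≤ 2`:
-- `∑_{u ∈ W} (-1)^{ℓ(u)} P_{a+b-1}(u·λ - ω₁) = ⌈a/3⌉`, where `·` is the dot action.
set_option linter.unnecessarySeqFocus false
set_option maxHeartbeats 1000000

def linMap (p q r s : ℚ) : VG → VG := fun x => ![p * x 0 + q * x 1, r * x 0 + s * x 1]

lemma sG0_lin (p q r s : ℚ) : sG 0 ∘ linMap p q r s = linMap (3*r - p) (3*s - q) r s := by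
  funext x j
  fin_cases j <;> simp [sG, CG, linMap, Fin.sum_univ_two, Pi.single_apply] <;> ring

lemma sG1_lin (p q r s : ℚ) : sG 1 ∘ linMap p q r s = linMap p q (p - r) (q - s) := by
  funext x j
  fin_cases j <;> simp [sG, CG, linMap, Fin.sum_univ_two, Pi.single_apply] <;> ring

lemma id_lin : (id : VG → VG) = linMap 1 0 0 1 := by
  funext x j; fin_cases j <;> simp [linMap]

lemma compG_nil : compG [] = id := rfl
lemma compG_cons (i : Fin 2) (l : List (Fin 2)) : compG (i :: l) = sG i ∘ compG l := rfl

lemma linMap_eq_iff {p q r s p' q' r' s' : ℚ} :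
    linMap p q r s = linMap p' q' r' s' ↔ p = p' ∧ q = q' ∧ r = r' ∧ s = s' := by
  constructor
  · intro h
    have h0 := congrFun (congrFun h ![1, 0]) 0
    have h1 := congrFun (congrFun h ![1, 0]) 1
    have h2 := congrFun (congrFun h ![0, 1]) 0
    have h3 := congrFun (congrFun h ![0, 1]) 1
    simp [linMap] at h0 h1 h2 h3
    exact ⟨h0, h2, h1, h3⟩
  · rintro ⟨rfl, rfl, rfl, rfl⟩; rfl

def g0 : VG → VG := linMap 1 0 0 1
def g1 : VG → VG := linMap (-1) 3 0 1
def g2 : VG → VG := linMap 1 0 1 (-1)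
def g3 : VG → VG := linMap (-1) 3 (-1) 2
def g4 : VG → VG := linMap 2 (-3) 1 (-1)
def g5 : VG → VG := linMap (-2) 3 (-1) 2
def g6 : VG → VG := linMap 2 (-3) 1 (-2)
def g7 : VG → VG := linMap (-2) 3 (-1) 1
def g8 : VG → VG := linMap 1 (-3) 1 (-2)
def g9 : VG → VG := linMap (-1) 0 (-1) 1
def g10 : VG → VG := linMap 1 (-3) 0 (-1)
def g11 : VG → VG := linMap (-1) 0 0 (-1)
lemma tbl0_0 : sG 0 ∘ g0 = g1 := by rw [g0, sG0_lin]; norm_num [g1]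
lemma tbl0_1 : sG 0 ∘ g1 = g0 := by rw [g1, sG0_lin]; norm_num [g0]
lemma tbl0_2 : sG 0 ∘ g2 = g4 := by rw [g2, sG0_lin]; norm_num [g4]
lemma tbl0_3 : sG 0 ∘ g3 = g5 := by rw [g3, sG0_lin]; norm_num [g5]
lemma tbl0_4 : sG 0 ∘ g4 = g2 := by rw [g4, sG0_lin]; norm_num [g2]
lemma tbl0_5 : sG 0 ∘ g5 = g3 := by rw [g5, sG0_lin]; norm_num [g3]
lemma tbl0_6 : sG 0 ∘ g6 = g8 := by rw [g6, sG0_lin]; norm_num [g8]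
lemma tbl0_7 : sG 0 ∘ g7 = g9 := by rw [g7, sG0_lin]; norm_num [g9]
lemma tbl0_8 : sG 0 ∘ g8 = g6 := by rw [g8, sG0_lin]; norm_num [g6]
lemma tbl0_9 : sG 0 ∘ g9 = g7 := by rw [g9, sG0_lin]; norm_num [g7]
lemma tbl0_10 : sG 0 ∘ g10 = g11 := by rw [g10, sG0_lin]; norm_num [g11]
lemma tbl0_11 : sG 0 ∘ g11 = g10 := by rw [g11, sG0_lin]; norm_num [g10]
lemma tbl1_0 : sG 1 ∘ g0 = g2 := by rw [g0, sG1_lin]; norm_num [g2]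
lemma tbl1_1 : sG 1 ∘ g1 = g3 := by rw [g1, sG1_lin]; norm_num [g3]
lemma tbl1_2 : sG 1 ∘ g2 = g0 := by rw [g2, sG1_lin]; norm_num [g0]
lemma tbl1_3 : sG 1 ∘ g3 = g1 := by rw [g3, sG1_lin]; norm_num [g1]
lemma tbl1_4 : sG 1 ∘ g4 = g6 := by rw [g4, sG1_lin]; norm_num [g6]
lemma tbl1_5 : sG 1 ∘ g5 = g7 := by rw [g5, sG1_lin]; norm_num [g7]
lemma tbl1_6 : sG 1 ∘ g6 = g4 := by rw [g6, sG1_lin]; norm_num [g4]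
lemma tbl1_7 : sG 1 ∘ g7 = g5 := by rw [g7, sG1_lin]; norm_num [g5]
lemma tbl1_8 : sG 1 ∘ g8 = g10 := by rw [g8, sG1_lin]; norm_num [g10]
lemma tbl1_9 : sG 1 ∘ g9 = g11 := by rw [g9, sG1_lin]; norm_num [g11]
lemma tbl1_10 : sG 1 ∘ g10 = g8 := by rw [g10, sG1_lin]; norm_num [g8]
lemma tbl1_11 : sG 1 ∘ g11 = g9 := by rw [g11, sG1_lin]; norm_num [g9]
lemma hg0 : compG [] = g0 := by rw [compG_nil, id_lin]; rfl
lemma hg1 : compG [0] = g1 := by rw [show ([0] : List (Fin 2)) = (0 :: [] : List (Fin 2)) from rfl, compG_cons, hg0, tbl0_0]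
lemma hg2 : compG [1] = g2 := by rw [show ([1] : List (Fin 2)) = (1 :: [] : List (Fin 2)) from rfl, compG_cons, hg0, tbl1_0]
lemma hg3 : compG [1, 0] = g3 := by rw [show ([1, 0] : List (Fin 2)) = (1 :: [0] : List (Fin 2)) from rfl, compG_cons, hg1, tbl1_1]
lemma hg4 : compG [0, 1] = g4 := by rw [show ([0, 1] : List (Fin 2)) = (0 :: [1] : List (Fin 2)) from rfl, compG_cons, hg2, tbl0_2]
lemma hg5 : compG [0, 1, 0] = g5 := by rw [show ([0, 1, 0] : List (Fin 2)) = (0 :: [1, 0] : List (Fin 2)) from rfl, compG_cons, hg3, tbl0_3]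
lemma hg6 : compG [1, 0, 1] = g6 := by rw [show ([1, 0, 1] : List (Fin 2)) = (1 :: [0, 1] : List (Fin 2)) from rfl, compG_cons, hg4, tbl1_4]
lemma hg7 : compG [1, 0, 1, 0] = g7 := by rw [show ([1, 0, 1, 0] : List (Fin 2)) = (1 :: [0, 1, 0] : List (Fin 2)) from rfl, compG_cons, hg5, tbl1_5]
lemma hg8 : compG [0, 1, 0, 1] = g8 := by rw [show ([0, 1, 0, 1] : List (Fin 2)) = (0 :: [1, 0, 1] : List (Fin 2)) from rfl, compG_cons, hg6, tbl0_6]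
lemma hg9 : compG [0, 1, 0, 1, 0] = g9 := by rw [show ([0, 1, 0, 1, 0] : List (Fin 2)) = (0 :: [1, 0, 1, 0] : List (Fin 2)) from rfl, compG_cons, hg7, tbl0_7]
lemma hg10 : compG [1, 0, 1, 0, 1] = g10 := by rw [show ([1, 0, 1, 0, 1] : List (Fin 2)) = (1 :: [0, 1, 0, 1] : List (Fin 2)) from rfl, compG_cons, hg8, tbl1_8]
lemma hg11 : compG [1, 0, 1, 0, 1, 0] = g11 := by rw [show ([1, 0, 1, 0, 1, 0] : List (Fin 2)) = (1 :: [0, 1, 0, 1, 0] : List (Fin 2)) from rfl, compG_cons, hg9, tbl1_9]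

open scoped Classical
def SW : Finset (VG → VG) := {g0,g1,g2,g3,g4,g5,g6,g7,g8,g9,g10,g11}

lemma memSW (l : List (Fin 2)) : compG l ∈ SW := by
  induction l with
  | nil => rw [hg0]; simp [SW]
  | cons i l ih =>
    rw [compG_cons]
    simp only [SW, Finset.mem_insert, Finset.mem_singleton] at ih ⊢
    fin_cases i
    · rcases ih with h|h|h|h|h|h|h|h|h|h|h|h <;> rw [h] <;> simp [tbl0_0, tbl0_1, tbl0_2, tbl0_3, tbl0_4, tbl0_5, tbl0_6, tbl0_7, tbl0_8, tbl0_9, tbl0_10, tbl0_11]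
    · rcases ih with h|h|h|h|h|h|h|h|h|h|h|h <;> rw [h] <;> simp [tbl1_0, tbl1_1, tbl1_2, tbl1_3, tbl1_4, tbl1_5, tbl1_6, tbl1_7, tbl1_8, tbl1_9, tbl1_10, tbl1_11]
lemma nm0 : g0 ∉ ({g1, g2, g3, g4, g5, g6, g7, g8, g9, g10, g11} : Finset (VG → VG)) := by
  norm_num [Finset.mem_insert, Finset.mem_singleton, g0, g1, g2, g3, g4, g5, g6, g7, g8, g9, g10, g11, linMap_eq_iff]
lemma nm1 : g1 ∉ ({g2, g3, g4, g5, g6, g7, g8, g9, g10, g11} : Finset (VG → VG)) := by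
  norm_num [Finset.mem_insert, Finset.mem_singleton, g0, g1, g2, g3, g4, g5, g6, g7, g8, g9, g10, g11, linMap_eq_iff]
lemma nm2 : g2 ∉ ({g3, g4, g5, g6, g7, g8, g9, g10, g11} : Finset (VG → VG)) := by
  norm_num [Finset.mem_insert, Finset.mem_singleton, g0, g1, g2, g3, g4, g5, g6, g7, g8, g9, g10, g11, linMap_eq_iff]
lemma nm3 : g3 ∉ ({g4, g5, g6, g7, g8, g9, g10, g11} : Finset (VG → VG)) := by
  norm_num [Finset.mem_insert, Finset.mem_singleton, g0, g1, g2, g3, g4, g5, g6, g7, g8, g9, g10, g11, linMap_eq_iff]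
lemma nm4 : g4 ∉ ({g5, g6, g7, g8, g9, g10, g11} : Finset (VG → VG)) := by
  norm_num [Finset.mem_insert, Finset.mem_singleton, g0, g1, g2, g3, g4, g5, g6, g7, g8, g9, g10, g11, linMap_eq_iff]
lemma nm5 : g5 ∉ ({g6, g7, g8, g9, g10, g11} : Finset (VG → VG)) := by
  norm_num [Finset.mem_insert, Finset.mem_singleton, g0, g1, g2, g3, g4, g5, g6, g7, g8, g9, g10, g11, linMap_eq_iff]
lemma nm6 : g6 ∉ ({g7, g8, g9, g10, g11} : Finset (VG → VG)) := by
  norm_num [Finset.mem_insert, Finset.mem_singleton, g0, g1, g2, g3, g4, g5, g6, g7, g8, g9, g10, g11, linMap_eq_iff]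
lemma nm7 : g7 ∉ ({g8, g9, g10, g11} : Finset (VG → VG)) := by
  norm_num [Finset.mem_insert, Finset.mem_singleton, g0, g1, g2, g3, g4, g5, g6, g7, g8, g9, g10, g11, linMap_eq_iff]
lemma nm8 : g8 ∉ ({g9, g10, g11} : Finset (VG → VG)) := by
  norm_num [Finset.mem_insert, Finset.mem_singleton, g0, g1, g2, g3, g4, g5, g6, g7, g8, g9, g10, g11, linMap_eq_iff]
lemma nm9 : g9 ∉ ({g10, g11} : Finset (VG → VG)) := by
  norm_num [Finset.mem_insert, Finset.mem_singleton, g0, g1, g2, g3, g4, g5, g6, g7, g8, g9, g10, g11, linMap_eq_iff]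
lemma nm10 : g10 ∉ ({g11} : Finset (VG → VG)) := by
  norm_num [Finset.mem_insert, Finset.mem_singleton, g0, g1, g2, g3, g4, g5, g6, g7, g8, g9, g10, g11, linMap_eq_iff]

def detF (u : VG → VG) : ℚ := u ![1,0] 0 * u ![0,1] 1 - u ![1,0] 1 * u ![0,1] 0

lemma detF_s (i : Fin 2) (v : VG → VG) : detF (sG i ∘ v) = - detF v := by
  fin_cases i <;>
    simp [detF, sG, CG, Fin.sum_univ_two, Pi.single_apply, Function.comp] <;> ring

lemma detF_comp (l : List (Fin 2)) : detF (compG l) = (-1) ^ l.length := by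
  induction l with
  | nil => rw [compG_nil, id_lin]; simp [detF, linMap]
  | cons i l ih => rw [compG_cons, detF_s, ih, List.length_cons, pow_succ]; ring

lemma parityQZ (m n : ℕ) (h : ((-1:ℚ))^m = (-1)^n) : ((-1:ℤ))^m = (-1)^n := by
  rcases Nat.even_or_odd m with hm|hm <;> rcases Nat.even_or_odd n with hn|hn <;>
    simp [hm.neg_one_pow, hn.neg_one_pow] at h ⊢ <;> norm_num at h

lemma sign_of (u : VG → VG) (l : List (Fin 2)) (hu : u = compG l) :
    ((-1:ℤ))^(lenG u) = (-1)^l.length := by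
  have hne : {m | ∃ l' : List (Fin 2), l'.length = m ∧ u = compG l'}.Nonempty :=
    ⟨l.length, l, rfl, hu⟩
  obtain ⟨l', hl', hu'⟩ := Nat.sInf_mem hne
  apply parityQZ
  have h1 : lenG u = l'.length := (by rw [lenG] : lenG u = sInf _) ▸ hl'.symm
  rw [h1, ← detF_comp, ← hu', hu, detF_comp]
lemma sgn0 : ((-1:ℤ))^(lenG g0) = 1 := by
  rw [sign_of g0 [] hg0.symm]; norm_num
lemma sgn1 : ((-1:ℤ))^(lenG g1) = -1 := by
  rw [sign_of g1 [0] hg1.symm]; norm_num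
lemma sgn2 : ((-1:ℤ))^(lenG g2) = -1 := by
  rw [sign_of g2 [1] hg2.symm]; norm_num
lemma sgn3 : ((-1:ℤ))^(lenG g3) = 1 := by
  rw [sign_of g3 [1, 0] hg3.symm]; norm_num
lemma sgn4 : ((-1:ℤ))^(lenG g4) = 1 := by
  rw [sign_of g4 [0, 1] hg4.symm]; norm_num
lemma sgn5 : ((-1:ℤ))^(lenG g5) = -1 := by
  rw [sign_of g5 [0, 1, 0] hg5.symm]; norm_num
lemma sgn6 : ((-1:ℤ))^(lenG g6) = -1 := by
  rw [sign_of g6 [1, 0, 1] hg6.symm]; norm_num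
lemma sgn7 : ((-1:ℤ))^(lenG g7) = 1 := by
  rw [sign_of g7 [1, 0, 1, 0] hg7.symm]; norm_num
lemma sgn8 : ((-1:ℤ))^(lenG g8) = 1 := by
  rw [sign_of g8 [0, 1, 0, 1] hg8.symm]; norm_num
lemma sgn9 : ((-1:ℤ))^(lenG g9) = -1 := by
  rw [sign_of g9 [0, 1, 0, 1, 0] hg9.symm]; norm_num
lemma sgn10 : ((-1:ℤ))^(lenG g10) = -1 := by
  rw [sign_of g10 [1, 0, 1, 0, 1] hg10.symm]; norm_num
lemma sgn11 : ((-1:ℤ))^(lenG g11) = 1 := by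
  rw [sign_of g11 [1, 0, 1, 0, 1, 0] hg11.symm]; norm_num

lemma vgEq {p q r s : ℚ} : (![p,q] : VG) = ![r,s] ↔ p = r ∧ q = s := by
  constructor
  · intro h; exact ⟨congrFun h 0, congrFun h 1⟩
  · rintro ⟨rfl, rfl⟩; rfl

def toM (c : ℕ×ℕ×ℕ×ℕ×ℕ×ℕ) : Multiset VG :=
  Multiset.replicate c.1 ![1,0] + Multiset.replicate c.2.1 ![0,1] +
  Multiset.replicate c.2.2.1 ![1,1] + Multiset.replicate c.2.2.2.1 ![2,1] +
  Multiset.replicate c.2.2.2.2.1 ![3,1] + Multiset.replicate c.2.2.2.2.2 ![3,2]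

lemma toM_counts (c : ℕ×ℕ×ℕ×ℕ×ℕ×ℕ) :
    (toM c).count ![1,0] = c.1 ∧ (toM c).count ![0,1] = c.2.1 ∧
    (toM c).count ![1,1] = c.2.2.1 ∧ (toM c).count ![2,1] = c.2.2.2.1 ∧
    (toM c).count ![3,1] = c.2.2.2.2.1 ∧ (toM c).count ![3,2] = c.2.2.2.2.2 := by
  norm_num [toM, Multiset.count_replicate, vgEq]

lemma toM_inj : Function.Injective toM := by
  rintro ⟨a1,a2,a3,a4,a5,a6⟩ ⟨b1,b2,b3,b4,b5,b6⟩ h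
  obtain ⟨k1, k2, k3, k4, k5, k6⟩ := toM_counts (a1,a2,a3,a4,a5,a6)
  obtain ⟨l1, l2, l3, l4, l5, l6⟩ := toM_counts (b1,b2,b3,b4,b5,b6)
  simp only [Prod.mk.injEq]
  rw [h] at k1 k2 k3 k4 k5 k6
  exact ⟨k1.symm.trans l1, k2.symm.trans l2, k3.symm.trans l3, k4.symm.trans l4,
    k5.symm.trans l5, k6.symm.trans l6⟩

lemma toM_card (c : ℕ×ℕ×ℕ×ℕ×ℕ×ℕ) :
    Multiset.card (toM c) = c.1 + c.2.1 + c.2.2.1 + c.2.2.2.1 + c.2.2.2.2.1 + c.2.2.2.2.2 := by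
  simp [toM]

lemma toM_sum0 (c : ℕ×ℕ×ℕ×ℕ×ℕ×ℕ) :
    (toM c).sum 0 = (c.1:ℚ) + c.2.2.1 + 2*c.2.2.2.1 + 3*c.2.2.2.2.1 + 3*c.2.2.2.2.2 := by
  simp [toM, Multiset.sum_replicate]
  push_cast; ring

lemma toM_sum1 (c : ℕ×ℕ×ℕ×ℕ×ℕ×ℕ) :
    (toM c).sum 1 = (c.2.1:ℚ) + c.2.2.1 + c.2.2.2.1 + c.2.2.2.2.1 + 2*c.2.2.2.2.2 := by
  simp [toM, Multiset.sum_replicate]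
  push_cast; ring

lemma mem_posG_iff (x : VG) :
    x ∈ posG ↔ (x = ![1,0] ∨ x = ![0,1] ∨ x = ![1,1] ∨ x = ![2,1] ∨ x = ![3,1] ∨ x = ![3,2]) := by
  simp [posG, Finset.mem_insert, Finset.mem_singleton]

lemma mem_toM {x : VG} {c : ℕ×ℕ×ℕ×ℕ×ℕ×ℕ} (hx : x ∈ toM c) : x ∈ posG := by
  rw [mem_posG_iff]
  simp only [toM, Multiset.mem_add, Multiset.mem_replicate] at hx
  tauto

lemma PG_eq (k : ℕ) (ν : VG) :
    PG k ν = (Finset.filter (fun c : ℕ×ℕ×ℕ×ℕ×ℕ×ℕ =>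
      c.1 + c.2.1 + c.2.2.1 + c.2.2.2.1 + c.2.2.2.2.1 + c.2.2.2.2.2 = k ∧
      (c.1:ℚ) + c.2.2.1 + 2*c.2.2.2.1 + 3*c.2.2.2.2.1 + 3*c.2.2.2.2.2 = ν 0 ∧
      (c.2.1:ℚ) + c.2.2.1 + c.2.2.2.1 + c.2.2.2.2.1 + 2*c.2.2.2.2.2 = ν 1)
      ((Finset.range (k+1)) ×ˢ (Finset.range (k+1)) ×ˢ (Finset.range (k+1)) ×ˢ
        (Finset.range (k+1)) ×ˢ (Finset.range (k+1)) ×ˢ (Finset.range (k+1)))).card := by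
  rw [PG]
  rw [show {m : Multiset VG | Multiset.card m = k ∧ (∀ x ∈ m, x ∈ posG) ∧ m.sum = ν} =
      toM '' ↑(Finset.filter (fun c : ℕ×ℕ×ℕ×ℕ×ℕ×ℕ =>
      c.1 + c.2.1 + c.2.2.1 + c.2.2.2.1 + c.2.2.2.2.1 + c.2.2.2.2.2 = k ∧
      (c.1:ℚ) + c.2.2.1 + 2*c.2.2.2.1 + 3*c.2.2.2.2.1 + 3*c.2.2.2.2.2 = ν 0 ∧
      (c.2.1:ℚ) + c.2.2.1 + c.2.2.2.1 + c.2.2.2.2.1 + 2*c.2.2.2.2.2 = ν 1)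
      ((Finset.range (k+1)) ×ˢ (Finset.range (k+1)) ×ˢ (Finset.range (k+1)) ×ˢ
        (Finset.range (k+1)) ×ˢ (Finset.range (k+1)) ×ˢ (Finset.range (k+1)))) from ?_]
  · rw [Set.ncard_image_of_injective _ toM_inj, Set.ncard_coe_finset]
  ext m
  simp only [Set.mem_setOf_eq, Set.mem_image, Finset.mem_coe, Finset.mem_filter,
    Finset.mem_product, Finset.mem_range]
  constructor
  · rintro ⟨hcard, hmem, hsum⟩
    set c : ℕ×ℕ×ℕ×ℕ×ℕ×ℕ :=
      (m.count ![1,0], m.count ![0,1], m.count ![1,1], m.count ![2,1],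
       m.count ![3,1], m.count ![3,2]) with hc
    obtain ⟨k1, k2, k3, k4, k5, k6⟩ := toM_counts c
    have hm : toM c = m := by
      refine Multiset.ext.mpr fun x => ?_
      rcases Classical.em (x ∈ posG) with hxp | hxp
      · rw [mem_posG_iff] at hxp
        rcases hxp with rfl|rfl|rfl|rfl|rfl|rfl
        · rw [k1]
        · rw [k2]
        · rw [k3]
        · rw [k4]
        · rw [k5]
        · rw [k6]
      · rw [Multiset.count_eq_zero_of_notMem (fun hx => hxp (mem_toM hx)),
          Multiset.count_eq_zero_of_notMem (fun hx => hxp (hmem x hx))]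
    have hb : ∀ y : VG, m.count y < k + 1 :=
      fun y => Nat.lt_succ_of_le (hcard ▸ Multiset.count_le_card _ m)
    refine ⟨c, ⟨⟨hb _, hb _, hb _, hb _, hb _, hb _⟩, ?_, ?_, ?_⟩, hm⟩
    · rw [← toM_card c, hm, hcard]
    · rw [← toM_sum0 c, hm, hsum]
    · rw [← toM_sum1 c, hm, hsum]
  · rintro ⟨c, ⟨-, hk, h0, h1⟩, rfl⟩
    refine ⟨by rw [toM_card, hk], fun x hx => mem_toM hx, ?_⟩
    funext j
    match j with
    | 0 => exact (toM_sum0 c).trans h0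
    | 1 => exact (toM_sum1 c).trans h1

lemma sum_nonneg_of_posG (m : Multiset VG) (hmem : ∀ x ∈ m, x ∈ posG) (j : Fin 2) :
    0 ≤ m.sum j := by
  induction m using Multiset.induction_on with
  | empty => simp
  | cons x s ih =>
    have hx := hmem x (Multiset.mem_cons_self x s)
    rw [mem_posG_iff] at hx
    have hxj : 0 ≤ x j := by
      rcases hx with rfl|rfl|rfl|rfl|rfl|rfl <;> fin_cases j <;> norm_num
    have hs := ih (fun y hy => hmem y (Multiset.mem_cons_of_mem hy))
    rw [Multiset.sum_cons]
    exact add_nonneg hxj hs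

lemma PG_zero (k : ℕ) (ν : VG) (j : Fin 2) (h : ν j < 0) : PG k ν = 0 := by
  rw [PG]
  convert Set.ncard_empty (Multiset VG)
  ext m
  simp only [Set.mem_setOf_eq, Set.mem_empty_iff_false, iff_false, not_and]
  intro _ hmem hsum
  exact absurd (hsum ▸ sum_nonneg_of_posG m hmem j) (not_le.mpr h)

def box4 (n : ℕ) : Finset (ℕ×ℕ×ℕ×ℕ) :=
  (Finset.range n) ×ˢ (Finset.range n) ×ˢ (Finset.range n) ×ˢ (Finset.range n)
def box3 (n : ℕ) : Finset (ℕ×ℕ×ℕ) := (Finset.range n) ×ˢ (Finset.range n) ×ˢ (Finset.range n)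
def box2 (n : ℕ) : Finset (ℕ×ℕ) := (Finset.range n) ×ˢ (Finset.range n)

def A1 (a : ℕ) : Finset (ℕ×ℕ×ℕ×ℕ) := (box4 (2*a+1)).filter
  (fun e => e.1 + 2*e.2.1 + 3*e.2.2.1 + 4*e.2.2.2 + 2 = 2*a ∧ a ≤ e.2.1 + 2*e.2.2.1 + 2*e.2.2.2 + 1)
def A2 (a : ℕ) : Finset (ℕ×ℕ×ℕ×ℕ) := (box4 (2*a+1)).filter
  (fun e => e.1 + 2*e.2.1 + 3*e.2.2.1 + 4*e.2.2.2 + 3 = a)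
def A3 (a : ℕ) : Finset (ℕ×ℕ×ℕ×ℕ) := (box4 (2*a+1)).filter
  (fun e => e.1 + 2*e.2.1 + 3*e.2.2.1 + 4*e.2.2.2 + 3 = 2*a ∧ a ≤ e.2.1 + 2*e.2.2.1 + 2*e.2.2.2 + 1)
def A4 (a : ℕ) : Finset (ℕ×ℕ×ℕ×ℕ) := (box4 (2*a+1)).filter
  (fun e => e.1 + 2*e.2.1 + 3*e.2.2.1 + 4*e.2.2.2 + 7 = a)
def Qset (a : ℕ) : Finset (ℕ×ℕ×ℕ) := (box3 (2*a+1)).filter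
  (fun q => 2*q.1 + 3*q.2.1 + 4*q.2.2 + 2 = 2*a)
def Q2set (a : ℕ) : Finset (ℕ×ℕ×ℕ) := (box3 (2*a+1)).filter
  (fun q => q.1 + 3*q.2.1 + 2*q.2.2 + 1 = a)
def P3set (a : ℕ) : Finset (ℕ×ℕ×ℕ) := (box3 (2*a+1)).filter
  (fun q => q.1 + 2*q.2.1 + 3*q.2.2 + 3 = a)
def Cset (a : ℕ) : Finset (ℕ×ℕ) := (box2 (2*a+1)).filter (fun p => p.1 + 3*p.2 + 1 = a)


lemma termA1 (a b : ℕ) :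
    PG (a+b-1) ![2*(a:ℚ)+3*(b:ℚ)-2, (a:ℚ)+2*(b:ℚ)-1] = (A1 a).card := by
  rw [PG_eq]
  apply Finset.card_bij'
    (i := fun (c : ℕ×ℕ×ℕ×ℕ×ℕ×ℕ) _ => (c.2.2.1, c.2.2.2.1, c.2.2.2.2.1, c.2.2.2.2.2 - b))
    (j := fun (e : ℕ×ℕ×ℕ×ℕ) _ =>
      (2*a+3*b - (e.1+2*e.2.1+3*e.2.2.1+3*(e.2.2.2+b)+2),
       a+2*b - (e.1+e.2.1+e.2.2.1+2*(e.2.2.2+b)+1), e.1, e.2.1, e.2.2.1, e.2.2.2+b))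
  · rintro ⟨c1,c2,c3,c4,c5,c6⟩ hc
    simp only [Finset.mem_filter] at hc ⊢
    simp only [A1, box4, Finset.mem_filter, Finset.mem_product, Finset.mem_range,
      Matrix.cons_val_zero, Matrix.cons_val_one, Matrix.head_cons, Prod.mk.injEq,
      and_true, true_and] at hc ⊢
    obtain ⟨-, hk, h0, h1⟩ := hc
    have ex0 : c1+c3+2*c4+3*c5+3*c6+2 = 2*a+3*b := by
      have hcst : ((c1+c3+2*c4+3*c5+3*c6+2 : ℕ) : ℚ) = ((2*a+3*b : ℕ) : ℚ) := by push_cast; linarith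
      exact_mod_cast hcst
    have ey0 : c2+c3+c4+c5+2*c6+1 = a+2*b := by
      have hcst : ((c2+c3+c4+c5+2*c6+1 : ℕ) : ℚ) = ((a+2*b : ℕ) : ℚ) := by push_cast; linarith
      exact_mod_cast hcst
    omega
  · rintro ⟨e1,e2,e3,e4⟩ he
    simp only [Finset.mem_filter] at he ⊢
    simp only [A1, box4, Finset.mem_filter, Finset.mem_product, Finset.mem_range,
      Matrix.cons_val_zero, Matrix.cons_val_one, Matrix.head_cons, Prod.mk.injEq,
      and_true, true_and] at he ⊢
    refine ⟨⟨?_, ?_, ?_, ?_, ?_, ?_⟩, ?_, ?_, ?_⟩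
    · omega
    · omega
    · omega
    · omega
    · omega
    · omega
    · omega
    · have hh : 2*a+3*b - (e1+2*e2+3*e3+3*(e4+b)+2) + (e1 + 2*e2 + 3*e3 + 3*(e4+b) + 2) = 2*a+3*b := by omega
      have hq := congrArg (fun t : ℕ => (t:ℚ)) hh
      push_cast at hq ⊢
      linarith
    · have hh : a+2*b - (e1+e2+e3+2*(e4+b)+1) + (e1 + e2 + e3 + 2*(e4+b) + 1) = a+2*b := by omega
      have hq := congrArg (fun t : ℕ => (t:ℚ)) hh
      push_cast at hq ⊢
      linarith
  · rintro ⟨c1,c2,c3,c4,c5,c6⟩ hc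
    simp only [Finset.mem_filter] at hc ⊢
    simp only [A1, box4, Finset.mem_filter, Finset.mem_product, Finset.mem_range,
      Matrix.cons_val_zero, Matrix.cons_val_one, Matrix.head_cons, Prod.mk.injEq,
      and_true, true_and] at hc ⊢
    obtain ⟨-, hk, h0, h1⟩ := hc
    have ex0 : c1+c3+2*c4+3*c5+3*c6+2 = 2*a+3*b := by
      have hcst : ((c1+c3+2*c4+3*c5+3*c6+2 : ℕ) : ℚ) = ((2*a+3*b : ℕ) : ℚ) := by push_cast; linarith
      exact_mod_cast hcst
    have ey0 : c2+c3+c4+c5+2*c6+1 = a+2*b := by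
      have hcst : ((c2+c3+c4+c5+2*c6+1 : ℕ) : ℚ) = ((a+2*b : ℕ) : ℚ) := by push_cast; linarith
      exact_mod_cast hcst
    omega
  · rintro ⟨e1,e2,e3,e4⟩ he
    simp only [Finset.mem_filter] at he ⊢
    simp only [A1, box4, Finset.mem_filter, Finset.mem_product, Finset.mem_range,
      Matrix.cons_val_zero, Matrix.cons_val_one, Matrix.head_cons, Prod.mk.injEq,
      and_true, true_and] at he ⊢
    try omega

lemma termA2 (a b : ℕ) :
    PG (a+b-1) ![(a:ℚ)+3*(b:ℚ)-3, (a:ℚ)+2*(b:ℚ)-1] = (A2 a).card := by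
  rw [PG_eq]
  apply Finset.card_bij'
    (i := fun (c : ℕ×ℕ×ℕ×ℕ×ℕ×ℕ) _ => (c.2.2.1, c.2.2.2.1, c.2.2.2.2.1, c.2.2.2.2.2 - b))
    (j := fun (e : ℕ×ℕ×ℕ×ℕ) _ =>
      (a+3*b - (e.1+2*e.2.1+3*e.2.2.1+3*(e.2.2.2+b)+3),
       a+2*b - (e.1+e.2.1+e.2.2.1+2*(e.2.2.2+b)+1), e.1, e.2.1, e.2.2.1, e.2.2.2+b))
  · rintro ⟨c1,c2,c3,c4,c5,c6⟩ hc
    simp only [Finset.mem_filter] at hc ⊢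
    simp only [A2, box4, Finset.mem_filter, Finset.mem_product, Finset.mem_range,
      Matrix.cons_val_zero, Matrix.cons_val_one, Matrix.head_cons, Prod.mk.injEq,
      and_true, true_and] at hc ⊢
    obtain ⟨-, hk, h0, h1⟩ := hc
    have ex0 : c1+c3+2*c4+3*c5+3*c6+3 = a+3*b := by
      have hcst : ((c1+c3+2*c4+3*c5+3*c6+3 : ℕ) : ℚ) = ((a+3*b : ℕ) : ℚ) := by push_cast; linarith
      exact_mod_cast hcst
    have ey0 : c2+c3+c4+c5+2*c6+1 = a+2*b := by
      have hcst : ((c2+c3+c4+c5+2*c6+1 : ℕ) : ℚ) = ((a+2*b : ℕ) : ℚ) := by push_cast; linarith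
      exact_mod_cast hcst
    omega
  · rintro ⟨e1,e2,e3,e4⟩ he
    simp only [Finset.mem_filter] at he ⊢
    simp only [A2, box4, Finset.mem_filter, Finset.mem_product, Finset.mem_range,
      Matrix.cons_val_zero, Matrix.cons_val_one, Matrix.head_cons, Prod.mk.injEq,
      and_true, true_and] at he ⊢
    refine ⟨⟨?_, ?_, ?_, ?_, ?_, ?_⟩, ?_, ?_, ?_⟩
    · omega
    · omega
    · omega
    · omega
    · omega
    · omega
    · omega
    · have hh : a+3*b - (e1+2*e2+3*e3+3*(e4+b)+3) + (e1 + 2*e2 + 3*e3 + 3*(e4+b) + 3) = a+3*b := by omega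
      have hq := congrArg (fun t : ℕ => (t:ℚ)) hh
      push_cast at hq ⊢
      linarith
    · have hh : a+2*b - (e1+e2+e3+2*(e4+b)+1) + (e1 + e2 + e3 + 2*(e4+b) + 1) = a+2*b := by omega
      have hq := congrArg (fun t : ℕ => (t:ℚ)) hh
      push_cast at hq ⊢
      linarith
  · rintro ⟨c1,c2,c3,c4,c5,c6⟩ hc
    simp only [Finset.mem_filter] at hc ⊢
    simp only [A2, box4, Finset.mem_filter, Finset.mem_product, Finset.mem_range,
      Matrix.cons_val_zero, Matrix.cons_val_one, Matrix.head_cons, Prod.mk.injEq,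
      and_true, true_and] at hc ⊢
    obtain ⟨-, hk, h0, h1⟩ := hc
    have ex0 : c1+c3+2*c4+3*c5+3*c6+3 = a+3*b := by
      have hcst : ((c1+c3+2*c4+3*c5+3*c6+3 : ℕ) : ℚ) = ((a+3*b : ℕ) : ℚ) := by push_cast; linarith
      exact_mod_cast hcst
    have ey0 : c2+c3+c4+c5+2*c6+1 = a+2*b := by
      have hcst : ((c2+c3+c4+c5+2*c6+1 : ℕ) : ℚ) = ((a+2*b : ℕ) : ℚ) := by push_cast; linarith
      exact_mod_cast hcst
    omega
  · rintro ⟨e1,e2,e3,e4⟩ he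
    simp only [Finset.mem_filter] at he ⊢
    simp only [A2, box4, Finset.mem_filter, Finset.mem_product, Finset.mem_range,
      Matrix.cons_val_zero, Matrix.cons_val_one, Matrix.head_cons, Prod.mk.injEq,
      and_true, true_and] at he ⊢
    try omega

lemma termA3 (a b : ℕ) :
    PG (a+b-1) ![2*(a:ℚ)+3*(b:ℚ)-2, (a:ℚ)+(b:ℚ)-2] = (A3 a).card := by
  rw [PG_eq]
  apply Finset.card_bij'
    (i := fun (c : ℕ×ℕ×ℕ×ℕ×ℕ×ℕ) _ => (c.2.2.1, c.2.2.2.1, c.2.2.2.2.1 - b, c.2.2.2.2.2))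
    (j := fun (e : ℕ×ℕ×ℕ×ℕ) _ =>
      (2*a+3*b - (e.1+2*e.2.1+3*(e.2.2.1+b)+3*e.2.2.2+2),
       a+b - (e.1+e.2.1+(e.2.2.1+b)+2*e.2.2.2+2), e.1, e.2.1, e.2.2.1+b, e.2.2.2))
  · rintro ⟨c1,c2,c3,c4,c5,c6⟩ hc
    simp only [Finset.mem_filter] at hc ⊢
    simp only [A3, box4, Finset.mem_filter, Finset.mem_product, Finset.mem_range,
      Matrix.cons_val_zero, Matrix.cons_val_one, Matrix.head_cons, Prod.mk.injEq,
      and_true, true_and] at hc ⊢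
    obtain ⟨-, hk, h0, h1⟩ := hc
    have ex0 : c1+c3+2*c4+3*c5+3*c6+2 = 2*a+3*b := by
      have hcst : ((c1+c3+2*c4+3*c5+3*c6+2 : ℕ) : ℚ) = ((2*a+3*b : ℕ) : ℚ) := by push_cast; linarith
      exact_mod_cast hcst
    have ey0 : c2+c3+c4+c5+2*c6+2 = a+b := by
      have hcst : ((c2+c3+c4+c5+2*c6+2 : ℕ) : ℚ) = ((a+b : ℕ) : ℚ) := by push_cast; linarith
      exact_mod_cast hcst
    omega
  · rintro ⟨e1,e2,e3,e4⟩ he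
    simp only [Finset.mem_filter] at he ⊢
    simp only [A3, box4, Finset.mem_filter, Finset.mem_product, Finset.mem_range,
      Matrix.cons_val_zero, Matrix.cons_val_one, Matrix.head_cons, Prod.mk.injEq,
      and_true, true_and] at he ⊢
    refine ⟨⟨?_, ?_, ?_, ?_, ?_, ?_⟩, ?_, ?_, ?_⟩
    · omega
    · omega
    · omega
    · omega
    · omega
    · omega
    · omega
    · have hh : 2*a+3*b - (e1+2*e2+3*(e3+b)+3*e4+2) + (e1 + 2*e2 + 3*(e3+b) + 3*e4 + 2) = 2*a+3*b := by omega
      have hq := congrArg (fun t : ℕ => (t:ℚ)) hh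
      push_cast at hq ⊢
      linarith
    · have hh : a+b - (e1+e2+(e3+b)+2*e4+2) + (e1 + e2 + (e3+b) + 2*e4 + 2) = a+b := by omega
      have hq := congrArg (fun t : ℕ => (t:ℚ)) hh
      push_cast at hq ⊢
      linarith
  · rintro ⟨c1,c2,c3,c4,c5,c6⟩ hc
    simp only [Finset.mem_filter] at hc ⊢
    simp only [A3, box4, Finset.mem_filter, Finset.mem_product, Finset.mem_range,
      Matrix.cons_val_zero, Matrix.cons_val_one, Matrix.head_cons, Prod.mk.injEq,
      and_true, true_and] at hc ⊢
    obtain ⟨-, hk, h0, h1⟩ := hc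
    have ex0 : c1+c3+2*c4+3*c5+3*c6+2 = 2*a+3*b := by
      have hcst : ((c1+c3+2*c4+3*c5+3*c6+2 : ℕ) : ℚ) = ((2*a+3*b : ℕ) : ℚ) := by push_cast; linarith
      exact_mod_cast hcst
    have ey0 : c2+c3+c4+c5+2*c6+2 = a+b := by
      have hcst : ((c2+c3+c4+c5+2*c6+2 : ℕ) : ℚ) = ((a+b : ℕ) : ℚ) := by push_cast; linarith
      exact_mod_cast hcst
    omega
  · rintro ⟨e1,e2,e3,e4⟩ he
    simp only [Finset.mem_filter] at he ⊢
    simp only [A3, box4, Finset.mem_filter, Finset.mem_product, Finset.mem_range,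
      Matrix.cons_val_zero, Matrix.cons_val_one, Matrix.head_cons, Prod.mk.injEq,
      and_true, true_and] at he ⊢
    try omega

lemma termA4 (a b : ℕ) :
    PG (a+b-1) ![(a:ℚ)-6, (a:ℚ)+(b:ℚ)-2] = (A4 a).card := by
  rw [PG_eq]
  apply Finset.card_bij'
    (i := fun (c : ℕ×ℕ×ℕ×ℕ×ℕ×ℕ) _ => (c.2.2.1, c.2.2.2.1, c.2.2.2.2.1, c.2.2.2.2.2))
    (j := fun (e : ℕ×ℕ×ℕ×ℕ) _ =>
      (a - (e.1+2*e.2.1+3*e.2.2.1+3*e.2.2.2+6),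
       a+b - (e.1+e.2.1+e.2.2.1+2*e.2.2.2+2), e.1, e.2.1, e.2.2.1, e.2.2.2))
  · rintro ⟨c1,c2,c3,c4,c5,c6⟩ hc
    simp only [Finset.mem_filter] at hc ⊢
    simp only [A4, box4, Finset.mem_filter, Finset.mem_product, Finset.mem_range,
      Matrix.cons_val_zero, Matrix.cons_val_one, Matrix.head_cons, Prod.mk.injEq,
      and_true, true_and] at hc ⊢
    obtain ⟨-, hk, h0, h1⟩ := hc
    have ex0 : c1+c3+2*c4+3*c5+3*c6+6 = a := by
      have hcst : ((c1+c3+2*c4+3*c5+3*c6+6 : ℕ) : ℚ) = ((a : ℕ) : ℚ) := by push_cast; linarith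
      exact_mod_cast hcst
    have ey0 : c2+c3+c4+c5+2*c6+2 = a+b := by
      have hcst : ((c2+c3+c4+c5+2*c6+2 : ℕ) : ℚ) = ((a+b : ℕ) : ℚ) := by push_cast; linarith
      exact_mod_cast hcst
    omega
  · rintro ⟨e1,e2,e3,e4⟩ he
    simp only [Finset.mem_filter] at he ⊢
    simp only [A4, box4, Finset.mem_filter, Finset.mem_product, Finset.mem_range,
      Matrix.cons_val_zero, Matrix.cons_val_one, Matrix.head_cons, Prod.mk.injEq,
      and_true, true_and] at he ⊢
    refine ⟨⟨?_, ?_, ?_, ?_, ?_, ?_⟩, ?_, ?_, ?_⟩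
    · omega
    · omega
    · omega
    · omega
    · omega
    · omega
    · omega
    · have hh : a - (e1+2*e2+3*e3+3*e4+6) + (e1 + 2*e2 + 3*e3 + 3*e4 + 6) = a := by omega
      have hq := congrArg (fun t : ℕ => (t:ℚ)) hh
      push_cast at hq ⊢
      linarith
    · have hh : a+b - (e1+e2+e3+2*e4+2) + (e1 + e2 + e3 + 2*e4 + 2) = a+b := by omega
      have hq := congrArg (fun t : ℕ => (t:ℚ)) hh
      push_cast at hq ⊢
      linarith
  · rintro ⟨c1,c2,c3,c4,c5,c6⟩ hc
    simp only [Finset.mem_filter] at hc ⊢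
    simp only [A4, box4, Finset.mem_filter, Finset.mem_product, Finset.mem_range,
      Matrix.cons_val_zero, Matrix.cons_val_one, Matrix.head_cons, Prod.mk.injEq,
      and_true, true_and] at hc ⊢
    obtain ⟨-, hk, h0, h1⟩ := hc
    have ex0 : c1+c3+2*c4+3*c5+3*c6+6 = a := by
      have hcst : ((c1+c3+2*c4+3*c5+3*c6+6 : ℕ) : ℚ) = ((a : ℕ) : ℚ) := by push_cast; linarith
      exact_mod_cast hcst
    have ey0 : c2+c3+c4+c5+2*c6+2 = a+b := by
      have hcst : ((c2+c3+c4+c5+2*c6+2 : ℕ) : ℚ) = ((a+b : ℕ) : ℚ) := by push_cast; linarith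
      exact_mod_cast hcst
    omega
  · rintro ⟨e1,e2,e3,e4⟩ he
    simp only [A4, box4, Finset.mem_filter, Finset.mem_product, Finset.mem_range,
      Matrix.cons_val_zero, Matrix.cons_val_one, Matrix.head_cons, Prod.mk.injEq,
      and_true, true_and] at he ⊢
    try omega

open scoped Classical

lemma split1 (a : ℕ) : (A1 a).card = (A3 a).card + (Qset a).card := by
  classical
  rw [← Finset.card_filter_add_card_filter_not (s := A1 a) (p := fun e => 1 ≤ e.1)]
  congr 1
  · apply Finset.card_bij'
      (i := fun (e : ℕ×ℕ×ℕ×ℕ) _ => (e.1 - 1, e.2.1, e.2.2.1, e.2.2.2))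
      (j := fun (f : ℕ×ℕ×ℕ×ℕ) _ => (f.1 + 1, f.2.1, f.2.2.1, f.2.2.2))
    · rintro ⟨e1,e2,e3,e4⟩ he
      simp only [A1, A3, box4, Finset.mem_filter, Finset.mem_product, Finset.mem_range] at he ⊢
      omega
    · rintro ⟨f1,f2,f3,f4⟩ hf
      simp only [A1, A3, box4, Finset.mem_filter, Finset.mem_product, Finset.mem_range] at hf ⊢
      omega
    · rintro ⟨e1,e2,e3,e4⟩ he
      simp only [A1, A3, box4, Finset.mem_filter, Finset.mem_product, Finset.mem_range,
        Prod.mk.injEq, and_true, true_and] at he ⊢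
      omega
    · rintro ⟨f1,f2,f3,f4⟩ hf
      simp only [A1, A3, box4, Finset.mem_filter, Finset.mem_product, Finset.mem_range,
        Prod.mk.injEq, and_true, true_and] at hf ⊢
      try omega
  · apply Finset.card_bij'
      (i := fun (e : ℕ×ℕ×ℕ×ℕ) _ => (e.2.1, e.2.2.1, e.2.2.2))
      (j := fun (q : ℕ×ℕ×ℕ) _ => (0, q.1, q.2.1, q.2.2))
    · rintro ⟨e1,e2,e3,e4⟩ he
      simp only [A1, Qset, box4, box3, Finset.mem_filter, Finset.mem_product,
        Finset.mem_range] at he ⊢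
      omega
    · rintro ⟨q1,q2,q3⟩ hq
      simp only [A1, Qset, box4, box3, Finset.mem_filter, Finset.mem_product,
        Finset.mem_range] at hq ⊢
      omega
    · rintro ⟨e1,e2,e3,e4⟩ he
      simp only [A1, Qset, box4, box3, Finset.mem_filter, Finset.mem_product,
        Finset.mem_range, Prod.mk.injEq, and_true, true_and] at he ⊢
      omega
    · rintro ⟨q1,q2,q3⟩ hq
      simp only [A1, Qset, box4, box3, Finset.mem_filter, Finset.mem_product,
        Finset.mem_range, Prod.mk.injEq, and_true, true_and] at hq ⊢
      try omega

lemma split2 (a : ℕ) : (A2 a).card = (A4 a).card + (P3set a).card := by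
  classical
  rw [← Finset.card_filter_add_card_filter_not (s := A2 a) (p := fun e => 1 ≤ e.2.2.2)]
  congr 1
  · apply Finset.card_bij'
      (i := fun (e : ℕ×ℕ×ℕ×ℕ) _ => (e.1, e.2.1, e.2.2.1, e.2.2.2 - 1))
      (j := fun (f : ℕ×ℕ×ℕ×ℕ) _ => (f.1, f.2.1, f.2.2.1, f.2.2.2 + 1))
    · rintro ⟨e1,e2,e3,e4⟩ he
      simp only [A2, A4, box4, Finset.mem_filter, Finset.mem_product, Finset.mem_range] at he ⊢
      omega
    · rintro ⟨f1,f2,f3,f4⟩ hf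
      simp only [A2, A4, box4, Finset.mem_filter, Finset.mem_product, Finset.mem_range] at hf ⊢
      omega
    · rintro ⟨e1,e2,e3,e4⟩ he
      simp only [A2, A4, box4, Finset.mem_filter, Finset.mem_product, Finset.mem_range,
        Prod.mk.injEq, and_true, true_and] at he ⊢
      omega
    · rintro ⟨f1,f2,f3,f4⟩ hf
      simp only [A2, A4, box4, Finset.mem_filter, Finset.mem_product, Finset.mem_range,
        Prod.mk.injEq, and_true, true_and] at hf ⊢
      try omega
  · apply Finset.card_bij'
      (i := fun (e : ℕ×ℕ×ℕ×ℕ) _ => (e.1, e.2.1, e.2.2.1))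
      (j := fun (q : ℕ×ℕ×ℕ) _ => (q.1, q.2.1, q.2.2, 0))
    · rintro ⟨e1,e2,e3,e4⟩ he
      simp only [A2, P3set, box4, box3, Finset.mem_filter, Finset.mem_product,
        Finset.mem_range] at he ⊢
      omega
    · rintro ⟨q1,q2,q3⟩ hq
      simp only [A2, P3set, box4, box3, Finset.mem_filter, Finset.mem_product,
        Finset.mem_range] at hq ⊢
      omega
    · rintro ⟨e1,e2,e3,e4⟩ he
      simp only [A2, P3set, box4, box3, Finset.mem_filter, Finset.mem_product,
        Finset.mem_range, Prod.mk.injEq, and_true, true_and] at he ⊢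
      omega
    · rintro ⟨q1,q2,q3⟩ hq
      simp only [A2, P3set, box4, box3, Finset.mem_filter, Finset.mem_product,
        Finset.mem_range, Prod.mk.injEq, and_true, true_and] at hq ⊢
      try omega

lemma splitQ (a : ℕ) : (Qset a).card = (Q2set a).card := by
  apply Finset.card_bij'
    (i := fun (q : ℕ×ℕ×ℕ) _ => (q.1, q.2.1 / 2, q.2.2))
    (j := fun (p : ℕ×ℕ×ℕ) _ => (p.1, 2*p.2.1, p.2.2))
  · rintro ⟨q1,q2,q3⟩ hq
    simp only [Qset, Q2set, box3, Finset.mem_filter, Finset.mem_product, Finset.mem_range] at hq ⊢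
    omega
  · rintro ⟨p1,p2,p3⟩ hp
    simp only [Qset, Q2set, box3, Finset.mem_filter, Finset.mem_product, Finset.mem_range] at hp ⊢
    omega
  · rintro ⟨q1,q2,q3⟩ hq
    simp only [Qset, Q2set, box3, Finset.mem_filter, Finset.mem_product, Finset.mem_range,
      Prod.mk.injEq, and_true, true_and] at hq ⊢
    omega
  · rintro ⟨p1,p2,p3⟩ hp
    simp only [Qset, Q2set, box3, Finset.mem_filter, Finset.mem_product, Finset.mem_range,
      Prod.mk.injEq, and_true, true_and] at hp ⊢
    omega

lemma split3 (a : ℕ) : (Q2set a).card = (P3set a).card + (Cset a).card := by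
  classical
  rw [← Finset.card_filter_add_card_filter_not (s := Q2set a) (p := fun q => 1 ≤ q.2.2)]
  congr 1
  · apply Finset.card_bij'
      (i := fun (q : ℕ×ℕ×ℕ) _ => (q.1, q.2.2 - 1, q.2.1))
      (j := fun (p : ℕ×ℕ×ℕ) _ => (p.1, p.2.2, p.2.1 + 1))
    · rintro ⟨q1,q2,q3⟩ hq
      simp only [Q2set, P3set, box3, Finset.mem_filter, Finset.mem_product,
        Finset.mem_range] at hq ⊢
      omega
    · rintro ⟨p1,p2,p3⟩ hp
      simp only [Q2set, P3set, box3, Finset.mem_filter, Finset.mem_product,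
        Finset.mem_range] at hp ⊢
      omega
    · rintro ⟨q1,q2,q3⟩ hq
      simp only [Q2set, P3set, box3, Finset.mem_filter, Finset.mem_product,
        Finset.mem_range, Prod.mk.injEq, and_true, true_and] at hq ⊢
      omega
    · rintro ⟨p1,p2,p3⟩ hp
      simp only [Q2set, P3set, box3, Finset.mem_filter, Finset.mem_product,
        Finset.mem_range, Prod.mk.injEq, and_true, true_and] at hp ⊢
      omega
  · apply Finset.card_bij'
      (i := fun (q : ℕ×ℕ×ℕ) _ => (q.1, q.2.1))
      (j := fun (p : ℕ×ℕ) _ => (p.1, p.2, 0))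
    · rintro ⟨q1,q2,q3⟩ hq
      simp only [Q2set, Cset, box3, box2, Finset.mem_filter, Finset.mem_product,
        Finset.mem_range] at hq ⊢
      omega
    · rintro ⟨p1,p2⟩ hp
      simp only [Q2set, Cset, box3, box2, Finset.mem_filter, Finset.mem_product,
        Finset.mem_range] at hp ⊢
      omega
    · rintro ⟨q1,q2,q3⟩ hq
      simp only [Q2set, Cset, box3, box2, Finset.mem_filter, Finset.mem_product,
        Finset.mem_range, Prod.mk.injEq, and_true, true_and] at hq ⊢
      omega
    · rintro ⟨p1,p2⟩ hp
      simp only [Q2set, Cset, box3, box2, Finset.mem_filter, Finset.mem_product,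
        Finset.mem_range, Prod.mk.injEq, and_true, true_and] at hp ⊢
      try omega

lemma cardC (a : ℕ) (ha : 1 ≤ a) : (Cset a).card = (a-1)/3 + 1 := by
  rw [← Finset.card_range ((a-1)/3 + 1)]
  apply Finset.card_bij'
    (i := fun (p : ℕ×ℕ) _ => p.2)
    (j := fun (n : ℕ) _ => (a - 1 - 3*n, n))
  · rintro ⟨p1,p2⟩ hp
    simp only [Cset, box2, Finset.mem_filter, Finset.mem_product, Finset.mem_range] at hp ⊢
    omega
  · rintro n hn
    simp only [Cset, box2, Finset.mem_filter, Finset.mem_product, Finset.mem_range] at hn ⊢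
    omega
  · rintro ⟨p1,p2⟩ hp
    simp only [Cset, box2, Finset.mem_filter, Finset.mem_product, Finset.mem_range,
      Prod.mk.injEq, and_true, true_and] at hp ⊢
    omega
  · rintro n hn
    try omega

lemma ceil3 (a : ℕ) (ha : 1 ≤ a) : (((a-1)/3 + 1 : ℕ) : ℤ) = ⌈(a:ℚ)/3⌉ := by
  obtain ⟨n, hn⟩ : ∃ n, n = (a-1)/3 + 1 := ⟨_, rfl⟩
  rw [← hn]
  have h1 : a ≤ 3*n := by omega
  have h2 : 3*n ≤ a + 2 := by omega
  have q1 : (a:ℚ) ≤ 3*(n:ℚ) := by exact_mod_cast h1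
  have q2 : 3*(n:ℚ) ≤ (a:ℚ) + 2 := by exact_mod_cast h2
  have ha' : (1:ℚ) ≤ (a:ℚ) := by exact_mod_cast ha
  symm
  rw [Int.ceil_eq_iff]
  push_cast
  constructor
  · linarith
  · linarith


lemma rhoEq : ρG = ![5,3] := by
  rw [ρG, posG]
  rw [Finset.sum_insert (by norm_num [Finset.mem_insert, Finset.mem_singleton, vgEq]),
      Finset.sum_insert (by norm_num [Finset.mem_insert, Finset.mem_singleton, vgEq]),
      Finset.sum_insert (by norm_num [Finset.mem_insert, Finset.mem_singleton, vgEq]),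
      Finset.sum_insert (by norm_num [Finset.mem_insert, Finset.mem_singleton, vgEq]),
      Finset.sum_insert (by norm_num [Finset.mem_singleton, vgEq]),
      Finset.sum_singleton]
  funext j; fin_cases j <;> norm_num

lemma harg (a b : ℕ) : (a:ℚ) • ω₁G + (b:ℚ) • ω₂G + ρG = ![2*(a:ℚ)+3*(b:ℚ)+5, (a:ℚ)+2*(b:ℚ)+3] := by
  funext j; fin_cases j <;> simp [ω₁G, ω₂G, rhoEq] <;> ring

lemma hv0 (a b : ℕ) : g0 ![2*(a:ℚ)+3*(b:ℚ)+5, (a:ℚ)+2*(b:ℚ)+3] - ρG - ω₁G = ![2*(a:ℚ)+3*(b:ℚ)-2, (a:ℚ)+2*(b:ℚ)-1] := by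
  funext j; fin_cases j <;> simp [g0, linMap, rhoEq, ω₁G] <;> ring

lemma hv1 (a b : ℕ) : g1 ![2*(a:ℚ)+3*(b:ℚ)+5, (a:ℚ)+2*(b:ℚ)+3] - ρG - ω₁G = ![(a:ℚ)+3*(b:ℚ)-3, (a:ℚ)+2*(b:ℚ)-1] := by
  funext j; fin_cases j <;> simp [g1, linMap, rhoEq, ω₁G] <;> ring

lemma hv2 (a b : ℕ) : g2 ![2*(a:ℚ)+3*(b:ℚ)+5, (a:ℚ)+2*(b:ℚ)+3] - ρG - ω₁G = ![2*(a:ℚ)+3*(b:ℚ)-2, (a:ℚ)+(b:ℚ)-2] := by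
  funext j; fin_cases j <;> simp [g2, linMap, rhoEq, ω₁G] <;> ring

lemma hv4 (a b : ℕ) : g4 ![2*(a:ℚ)+3*(b:ℚ)+5, (a:ℚ)+2*(b:ℚ)+3] - ρG - ω₁G = ![(a:ℚ)-6, (a:ℚ)+(b:ℚ)-2] := by
  funext j; fin_cases j <;> simp [g4, linMap, rhoEq, ω₁G] <;> ring

lemma zv3 (a b : ℕ) (hb : b ≤ 2) :
    PG (a+b-1) (g3 ![2*(a:ℚ)+3*(b:ℚ)+5, (a:ℚ)+2*(b:ℚ)+3] - ρG - ω₁G) = 0 := by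
  apply PG_zero _ _ 1
  have hbq : (b:ℚ) ≤ 2 := by exact_mod_cast hb
  have haq : (0:ℚ) ≤ (a:ℚ) := Nat.cast_nonneg a
  have hbq0 : (0:ℚ) ≤ (b:ℚ) := Nat.cast_nonneg b
  simp [g3, linMap, rhoEq, ω₁G]
  linarith

lemma zv5 (a b : ℕ) (hb : b ≤ 2) :
    PG (a+b-1) (g5 ![2*(a:ℚ)+3*(b:ℚ)+5, (a:ℚ)+2*(b:ℚ)+3] - ρG - ω₁G) = 0 := by
  apply PG_zero _ _ 0
  have hbq : (b:ℚ) ≤ 2 := by exact_mod_cast hb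
  have haq : (0:ℚ) ≤ (a:ℚ) := Nat.cast_nonneg a
  have hbq0 : (0:ℚ) ≤ (b:ℚ) := Nat.cast_nonneg b
  simp [g5, linMap, rhoEq, ω₁G]
  linarith

lemma zv6 (a b : ℕ) (hb : b ≤ 2) :
    PG (a+b-1) (g6 ![2*(a:ℚ)+3*(b:ℚ)+5, (a:ℚ)+2*(b:ℚ)+3] - ρG - ω₁G) = 0 := by
  apply PG_zero _ _ 1
  have hbq : (b:ℚ) ≤ 2 := by exact_mod_cast hb
  have haq : (0:ℚ) ≤ (a:ℚ) := Nat.cast_nonneg a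
  have hbq0 : (0:ℚ) ≤ (b:ℚ) := Nat.cast_nonneg b
  simp [g6, linMap, rhoEq, ω₁G]
  linarith

lemma zv7 (a b : ℕ) (hb : b ≤ 2) :
    PG (a+b-1) (g7 ![2*(a:ℚ)+3*(b:ℚ)+5, (a:ℚ)+2*(b:ℚ)+3] - ρG - ω₁G) = 0 := by
  apply PG_zero _ _ 1
  have hbq : (b:ℚ) ≤ 2 := by exact_mod_cast hb
  have haq : (0:ℚ) ≤ (a:ℚ) := Nat.cast_nonneg a
  have hbq0 : (0:ℚ) ≤ (b:ℚ) := Nat.cast_nonneg b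
  simp [g7, linMap, rhoEq, ω₁G]
  linarith

lemma zv8 (a b : ℕ) (hb : b ≤ 2) :
    PG (a+b-1) (g8 ![2*(a:ℚ)+3*(b:ℚ)+5, (a:ℚ)+2*(b:ℚ)+3] - ρG - ω₁G) = 0 := by
  apply PG_zero _ _ 1
  have hbq : (b:ℚ) ≤ 2 := by exact_mod_cast hb
  have haq : (0:ℚ) ≤ (a:ℚ) := Nat.cast_nonneg a
  have hbq0 : (0:ℚ) ≤ (b:ℚ) := Nat.cast_nonneg b
  simp [g8, linMap, rhoEq, ω₁G]
  linarith

lemma zv9 (a b : ℕ) (hb : b ≤ 2) :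
    PG (a+b-1) (g9 ![2*(a:ℚ)+3*(b:ℚ)+5, (a:ℚ)+2*(b:ℚ)+3] - ρG - ω₁G) = 0 := by
  apply PG_zero _ _ 0
  have hbq : (b:ℚ) ≤ 2 := by exact_mod_cast hb
  have haq : (0:ℚ) ≤ (a:ℚ) := Nat.cast_nonneg a
  have hbq0 : (0:ℚ) ≤ (b:ℚ) := Nat.cast_nonneg b
  simp [g9, linMap, rhoEq, ω₁G]
  linarith

lemma zv10 (a b : ℕ) (hb : b ≤ 2) :
    PG (a+b-1) (g10 ![2*(a:ℚ)+3*(b:ℚ)+5, (a:ℚ)+2*(b:ℚ)+3] - ρG - ω₁G) = 0 := by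
  apply PG_zero _ _ 1
  have hbq : (b:ℚ) ≤ 2 := by exact_mod_cast hb
  have haq : (0:ℚ) ≤ (a:ℚ) := Nat.cast_nonneg a
  have hbq0 : (0:ℚ) ≤ (b:ℚ) := Nat.cast_nonneg b
  simp [g10, linMap, rhoEq, ω₁G]
  linarith

lemma zv11 (a b : ℕ) (hb : b ≤ 2) :
    PG (a+b-1) (g11 ![2*(a:ℚ)+3*(b:ℚ)+5, (a:ℚ)+2*(b:ℚ)+3] - ρG - ω₁G) = 0 := by
  apply PG_zero _ _ 0
  have hbq : (b:ℚ) ≤ 2 := by exact_mod_cast hb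
  have haq : (0:ℚ) ≤ (a:ℚ) := Nat.cast_nonneg a
  have hbq0 : (0:ℚ) ≤ (b:ℚ) := Nat.cast_nonneg b
  simp [g11, linMap, rhoEq, ω₁G]
  linarith


lemma SW_eq : SW = insert g0 (insert g1 (insert g2 (insert g3 (insert g4 (insert g5
    (insert g6 (insert g7 (insert g8 (insert g9 (insert g10 ({g11} : Finset (VG → VG)))))))))))) := rfl


theorem statement17 (W : Finset (VG → VG))
    (hW : ∀ u, u ∈ W ↔ ∃ l : List (Fin 2), u = compG l)
    (a b : ℕ) (ha : 1 ≤ a) (hb : b ≤ 2) :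
    ∑ u ∈ W, (-1 : ℤ) ^ lenG u *
      (PG (a + b - 1) (u ((a : ℚ) • ω₁G + (b : ℚ) • ω₂G + ρG) - ρG - ω₁G) : ℤ) =
      ⌈(a : ℚ) / 3⌉ := by
  have hW12 : W = SW := by
    apply Finset.ext
    intro u
    rw [hW]
    constructor
    · rintro ⟨l, rfl⟩; exact memSW l
    · intro h
      simp only [SW, Finset.mem_insert, Finset.mem_singleton] at h
      rcases h with rfl|rfl|rfl|rfl|rfl|rfl|rfl|rfl|rfl|rfl|rfl|rfl
      exacts [⟨[], hg0.symm⟩, ⟨[0], hg1.symm⟩, ⟨[1], hg2.symm⟩, ⟨[1, 0], hg3.symm⟩, ⟨[0, 1], hg4.symm⟩, ⟨[0, 1, 0], hg5.symm⟩, ⟨[1, 0, 1], hg6.symm⟩, ⟨[1, 0, 1, 0], hg7.symm⟩, ⟨[0, 1, 0, 1], hg8.symm⟩, ⟨[0, 1, 0, 1, 0], hg9.symm⟩, ⟨[1, 0, 1, 0, 1], hg10.symm⟩, ⟨[1, 0, 1, 0, 1, 0], hg11.symm⟩]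
  rw [hW12, SW_eq]
  simp only [Finset.sum_insert nm0, Finset.sum_insert nm1, Finset.sum_insert nm2, Finset.sum_insert nm3, Finset.sum_insert nm4, Finset.sum_insert nm5, Finset.sum_insert nm6, Finset.sum_insert nm7, Finset.sum_insert nm8, Finset.sum_insert nm9, Finset.sum_insert nm10, Finset.sum_singleton, harg a b]
  rw [sgn0, sgn1, sgn2, sgn3, sgn4, sgn5, sgn6, sgn7, sgn8, sgn9, sgn10, sgn11]
  rw [hv0 a b, hv1 a b, hv2 a b, hv4 a b]
  rw [zv3 a b hb, zv5 a b hb, zv6 a b hb, zv7 a b hb, zv8 a b hb, zv9 a b hb,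
      zv10 a b hb, zv11 a b hb]
  rw [termA1 a b, termA2 a b, termA3 a b, termA4 a b]
  have s1 := split1 a
  have s2 := split2 a
  have sq := splitQ a
  have s3 := split3 a
  have hC := cardC a ha
  rw [← ceil3 a ha]
  push_cast
  omega

end
end

section
/- For an integer c ≥ 0, let P_c(n) denote the number of ways to write n as an ordered-irrelevant sum n = n₁ + ⋯ + n_c with each n_i ∈ {0,1,2,3} (i.e., the number of multisets of size c from {0,1,2,3} with sum n). Then P_c(2c) − P_c(c − 2) = ⌈(c+1)/3⌉, where P_c(c−2) is interpreted as 0 when c < 2. -/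
def Fbox (n : ℕ) : Finset (ℕ × ℕ) :=
  (Finset.range (n+1) ×ˢ Finset.range (n+1)).filter (fun p => 2*p.1+3*p.2 ≤ n)

/-- `Pbox c n` is the number of multisets of size `c` with entries in `{0, 1, 2, 3}`
whose sum is `n` (so `Pbox c n = 0` for negative `n`). -/
noncomputable def Pbox (c : ℕ) (n : ℤ) : ℕ :=
  Set.ncard {m : Multiset ℕ | Multiset.card m = c ∧ (∀ x ∈ m, x ≤ 3) ∧ (m.sum : ℤ) = n}

lemma mem_Fbox {n : ℕ} {p : ℕ × ℕ} : p ∈ Fbox n ↔ 2*p.1 + 3*p.2 ≤ n := by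
  simp only [Fbox, Finset.mem_filter, Finset.mem_product, Finset.mem_range]
  omega

lemma count_lemmas (m : Multiset ℕ) (h : ∀ x ∈ m, x ≤ 3) :
    Multiset.card m = m.count 0 + m.count 1 + m.count 2 + m.count 3 ∧
    m.sum = m.count 1 + 2 * m.count 2 + 3 * m.count 3 := by
  induction m using Multiset.induction_on with
  | empty => simp
  | cons a s ih =>
    have ha : a ≤ 3 := h a (Multiset.mem_cons_self a s)
    have hs : ∀ x ∈ s, x ≤ 3 := fun x hx => h x (Multiset.mem_cons_of_mem hx)
    obtain ⟨h1, h2⟩ := ih hs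
    simp only [Multiset.card_cons, Multiset.sum_cons, Multiset.count_cons]
    interval_cases a <;> simp <;> omega

lemma eq_of_counts (m m' : Multiset ℕ) (h : ∀ x ∈ m, x ≤ 3) (h' : ∀ x ∈ m', x ≤ 3)
    (e : ∀ i ≤ 3, m.count i = m'.count i) : m = m' := by
  ext a
  by_cases ha : a ≤ 3
  · exact e a ha
  · rw [Multiset.count_eq_zero_of_notMem, Multiset.count_eq_zero_of_notMem]
    · intro hm; exact ha (h' a hm)
    · intro hm; exact ha (h a hm)

/-- the multiset with c0 zeros, c1 ones, c2 twos, c3 threes -/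
def bld (c0 c1 c2 c3 : ℕ) : Multiset ℕ :=
  Multiset.replicate c0 0 + Multiset.replicate c1 1 + Multiset.replicate c2 2 +
    Multiset.replicate c3 3

lemma bld_le (c0 c1 c2 c3 : ℕ) : ∀ x ∈ bld c0 c1 c2 c3, x ≤ 3 := by
  intro x hx
  simp only [bld, Multiset.mem_add, Multiset.mem_replicate] at hx
  omega

lemma bld_count (c0 c1 c2 c3 : ℕ) :
    (bld c0 c1 c2 c3).count 0 = c0 ∧ (bld c0 c1 c2 c3).count 1 = c1 ∧
    (bld c0 c1 c2 c3).count 2 = c2 ∧ (bld c0 c1 c2 c3).count 3 = c3 := by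
  simp [bld, Multiset.count_replicate]

lemma bld_card (c0 c1 c2 c3 : ℕ) : Multiset.card (bld c0 c1 c2 c3) = c0 + c1 + c2 + c3 := by
  simp [bld]

lemma bld_sum (c0 c1 c2 c3 : ℕ) : (bld c0 c1 c2 c3).sum = c1 + 2 * c2 + 3 * c3 := by
  simp [bld, Multiset.sum_replicate]
  ring

lemma pbox_two (c : ℕ) : Pbox c (2 * c) = (Fbox c).card := by
  classical
  have key : {m : Multiset ℕ | Multiset.card m = c ∧ (∀ x ∈ m, x ≤ 3) ∧ (m.sum : ℤ) = 2 * c}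
      = ↑((Fbox c).image (fun p => bld p.2 p.1 (c - 3*p.2 - 2*p.1) (2*p.2 + p.1))) := by
    ext m
    simp only [Set.mem_setOf_eq, Finset.coe_image, Set.mem_image, Finset.mem_coe]
    constructor
    · rintro ⟨hcard, hle, hsum⟩
      have hsum' : m.sum = 2 * c := by exact_mod_cast hsum
      obtain ⟨h1, h2⟩ := count_lemmas m hle
      refine ⟨(m.count 1, m.count 0), mem_Fbox.mpr (by omega), ?_⟩
      refine eq_of_counts _ _ (bld_le _ _ _ _) hle ?_
      intro i hi
      dsimp only
      obtain ⟨e0, e1, e2, e3⟩ := bld_count (m.count 0) (m.count 1)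
        (c - 3*(m.count 0) - 2*(m.count 1)) (2*(m.count 0) + m.count 1)
      interval_cases i <;> simp only [e0, e1, e2, e3] <;> omega
    · rintro ⟨p, hp, rfl⟩
      have hp' := mem_Fbox.mp hp
      obtain ⟨e0, e1, e2, e3⟩ := bld_count p.2 p.1 (c - 3*p.2 - 2*p.1) (2*p.2 + p.1)
      refine ⟨by rw [bld_card]; omega, bld_le _ _ _ _, ?_⟩
      rw [bld_sum]
      push_cast
      omega
  have hinj : Set.InjOn (fun p : ℕ × ℕ => bld p.2 p.1 (c - 3*p.2 - 2*p.1) (2*p.2 + p.1))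
      ↑(Fbox c) := by
    intro p _ q _ he
    obtain ⟨e0, e1, _, _⟩ := bld_count p.2 p.1 (c - 3*p.2 - 2*p.1) (2*p.2 + p.1)
    obtain ⟨f0, f1, _, _⟩ := bld_count q.2 q.1 (c - 3*q.2 - 2*q.1) (2*q.2 + q.1)
    have he' : bld p.2 p.1 (c - 3*p.2 - 2*p.1) (2*p.2 + p.1)
        = bld q.2 q.1 (c - 3*q.2 - 2*q.1) (2*q.2 + q.1) := he
    have h0 : p.2 = q.2 := by rw [← e0, ← f0, he']
    have h1 : p.1 = q.1 := by rw [← e1, ← f1, he']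
    exact Prod.ext h1 h0
  rw [Pbox, key, Set.ncard_coe_finset, Finset.card_image_of_injOn hinj]

lemma pbox_minus (d : ℕ) : Pbox (d+2) (((d:ℤ)+2) - 2) = (Fbox d).card := by
  classical
  have key : {m : Multiset ℕ | Multiset.card m = d+2 ∧ (∀ x ∈ m, x ≤ 3) ∧ (m.sum : ℤ) = ((d:ℤ)+2) - 2}
      = ↑((Fbox d).image (fun p => bld (p.1 + 2*p.2 + 2) (d - 2*p.1 - 3*p.2) p.1 p.2)) := by
    ext m
    simp only [Set.mem_setOf_eq, Finset.coe_image, Set.mem_image, Finset.mem_coe]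
    constructor
    · rintro ⟨hcard, hle, hsum⟩
      have hsum' : m.sum = d := by
        have : ((d:ℤ)+2) - 2 = (d:ℤ) := by ring
        rw [this] at hsum
        exact_mod_cast hsum
      obtain ⟨h1, h2⟩ := count_lemmas m hle
      refine ⟨(m.count 2, m.count 3), mem_Fbox.mpr (by omega), ?_⟩
      refine eq_of_counts _ _ (bld_le _ _ _ _) hle ?_
      intro i hi
      dsimp only
      obtain ⟨e0, e1, e2, e3⟩ := bld_count (m.count 2 + 2*(m.count 3) + 2)
        (d - 2*(m.count 2) - 3*(m.count 3)) (m.count 2) (m.count 3)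
      interval_cases i <;> simp only [e0, e1, e2, e3] <;> omega
    · rintro ⟨p, hp, rfl⟩
      have hp' := mem_Fbox.mp hp
      refine ⟨by rw [bld_card]; omega, bld_le _ _ _ _, ?_⟩
      rw [bld_sum]
      push_cast
      omega
  have hinj : Set.InjOn (fun p : ℕ × ℕ => bld (p.1 + 2*p.2 + 2) (d - 2*p.1 - 3*p.2) p.1 p.2)
      ↑(Fbox d) := by
    intro p _ q _ he
    obtain ⟨_, _, e2, e3⟩ := bld_count (p.1 + 2*p.2 + 2) (d - 2*p.1 - 3*p.2) p.1 p.2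
    obtain ⟨_, _, f2, f3⟩ := bld_count (q.1 + 2*q.2 + 2) (d - 2*q.1 - 3*q.2) q.1 q.2
    have he' : bld (p.1 + 2*p.2 + 2) (d - 2*p.1 - 3*p.2) p.1 p.2
        = bld (q.1 + 2*q.2 + 2) (d - 2*q.1 - 3*q.2) q.1 q.2 := he
    have h2' : p.1 = q.1 := by rw [← e2, ← f2, he']
    have h3' : p.2 = q.2 := by rw [← e3, ← f3, he']
    exact Prod.ext h2' h3'
  rw [Pbox, key, Set.ncard_coe_finset, Finset.card_image_of_injOn hinj]

lemma pbox_neg (c : ℕ) (hc : c < 2) : Pbox c ((c:ℤ) - 2) = 0 := by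
  have : {m : Multiset ℕ | Multiset.card m = c ∧ (∀ x ∈ m, x ≤ 3) ∧ (m.sum : ℤ) = (c:ℤ) - 2} = ∅ := by
    ext m
    simp only [Set.mem_setOf_eq, Set.mem_empty_iff_false, iff_false]
    rintro ⟨_, _, hsum⟩
    have : (0:ℤ) ≤ (m.sum : ℤ) := by positivity
    omega
  rw [Pbox, this, Set.ncard_empty]

lemma Fbox_step (c : ℕ) : (Fbox (c+6)).card = (Fbox c).card + (c+6) := by
  classical
  have hsplit := Finset.card_filter_add_card_filter_not
    (s := Fbox (c+6)) (p := fun p => 2 ≤ p.2)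
  have himg : (Fbox (c+6)).filter (fun p => 2 ≤ p.2)
      = (Fbox c).image (fun p => (p.1, p.2 + 2)) := by
    ext ⟨a, b⟩
    simp only [Finset.mem_filter, Finset.mem_image, mem_Fbox]
    constructor
    · rintro ⟨h1, h2⟩
      exact ⟨(a, b - 2), by simp only [mem_Fbox]; omega, by simp; omega⟩
    · rintro ⟨p, hp, he⟩
      have h1 : p.1 = a := congrArg Prod.fst he
      have h2 : p.2 + 2 = b := congrArg Prod.snd he
      constructor <;> omega
  have hinj : Function.Injective (fun p : ℕ × ℕ => (p.1, p.2 + 2)) := by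
    intro p q h
    have h' : (p.1, p.2 + 2) = (q.1, q.2 + 2) := h
    rw [Prod.mk.injEq] at h'
    exact Prod.ext h'.1 (by omega)
  have hcard1 : ((Fbox (c+6)).filter (fun p => 2 ≤ p.2)).card = (Fbox c).card := by
    rw [himg, Finset.card_image_of_injective _ hinj]
  have hun : (Fbox (c+6)).filter (fun p => ¬ 2 ≤ p.2)
      = (Fbox (c+6)).filter (fun p => p.2 = 0) ∪ (Fbox (c+6)).filter (fun p => p.2 = 1) := by
    ext p
    simp only [Finset.mem_filter, Finset.mem_union, mem_Fbox]
    omega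
  have h0 : (Fbox (c+6)).filter (fun p => p.2 = 0)
      = (Finset.range ((c+6)/2 + 1)).image (fun a => (a, 0)) := by
    ext ⟨a, b⟩
    simp only [Finset.mem_filter, Finset.mem_image, Finset.mem_range, mem_Fbox]
    constructor
    · rintro ⟨h1, h2⟩
      exact ⟨a, by omega, by simp [h2]⟩
    · rintro ⟨x, hx, he⟩
      have h1 : x = a := congrArg Prod.fst he
      have h2 : (0:ℕ) = b := congrArg Prod.snd he
      constructor <;> omega
  have h1 : (Fbox (c+6)).filter (fun p => p.2 = 1)
      = (Finset.range ((c+3)/2 + 1)).image (fun a => (a, 1)) := by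
    ext ⟨a, b⟩
    simp only [Finset.mem_filter, Finset.mem_image, Finset.mem_range, mem_Fbox]
    constructor
    · rintro ⟨hh1, hh2⟩
      exact ⟨a, by omega, by simp [hh2]⟩
    · rintro ⟨x, hx, he⟩
      have hh1 : x = a := congrArg Prod.fst he
      have hh2 : (1:ℕ) = b := congrArg Prod.snd he
      constructor <;> omega
  have hd : Disjoint ((Fbox (c+6)).filter (fun p => p.2 = 0))
      ((Fbox (c+6)).filter (fun p => p.2 = 1)) := by
    rw [Finset.disjoint_left]
    intro p hp hq
    simp only [Finset.mem_filter] at hp hq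
    omega
  have hinj0 : Function.Injective (fun a : ℕ => (a, 0)) := by
    intro x y h
    have h' : (x, (0:ℕ)) = (y, (0:ℕ)) := h
    rw [Prod.mk.injEq] at h'
    exact h'.1
  have hinj1 : Function.Injective (fun a : ℕ => (a, 1)) := by
    intro x y h
    have h' : (x, (1:ℕ)) = (y, (1:ℕ)) := h
    rw [Prod.mk.injEq] at h'
    exact h'.1
  have hcard2 : ((Fbox (c+6)).filter (fun p => ¬ 2 ≤ p.2)).card = c + 6 := by
    rw [hun, Finset.card_union_of_disjoint hd, h0, h1,
      Finset.card_image_of_injective _ hinj0, Finset.card_image_of_injective _ hinj1,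
      Finset.card_range, Finset.card_range]
    omega
  omega

lemma Acard : ∀ d : ℕ, ((Fbox (d+2)).card : ℤ) - (Fbox d).card = ⌈((d:ℚ)+3)/3⌉ := by
  intro d
  induction d using Nat.strong_induction_on with
  | _ d ih =>
    rcases lt_or_ge d 6 with hd | hd
    · interval_cases d <;> norm_num [show (Fbox 0).card = 1 by decide,
        show (Fbox 1).card = 1 by decide, show (Fbox 2).card = 2 by decide,
        show (Fbox 3).card = 3 by decide, show (Fbox 4).card = 4 by decide,
        show (Fbox 5).card = 5 by decide, show (Fbox 6).card = 7 by decide,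
        show (Fbox 7).card = 8 by decide] <;>
      · rw [eq_comm, Int.ceil_eq_iff] <;> constructor <;> norm_num
    · obtain ⟨e, rfl⟩ : ∃ e, d = e + 6 := ⟨d - 6, by omega⟩
      have h1 : (Fbox (e + 6 + 2)).card = (Fbox (e+2)).card + (e + 2 + 6) := by
        have := Fbox_step (e+2)
        convert this using 2 <;> omega
      have h2 : (Fbox (e + 6)).card = (Fbox e).card + (e + 6) := Fbox_step e
      have ihe := ih e (by omega)
      have hceil : ⌈(((e:ℚ)+6)+3)/3⌉ = ⌈((e:ℚ)+3)/3⌉ + 2 := by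
        have : (((e:ℚ)+6)+3)/3 = ((e:ℚ)+3)/3 + (2:ℤ) := by push_cast; ring
        rw [this, Int.ceil_add_intCast]
      push_cast [h1, h2]
      push_cast at ihe
      rw [show ((e:ℚ)+6+3)/3 = (((e:ℚ)+6)+3)/3 by ring] at *
      rw [hceil]
      omega

/-- `P_c(2c) - P_c(c - 2) = ⌈(c+1)/3⌉`, where `P_c(c-2)` is `0` when `c < 2`. -/
theorem statement18 (c : ℕ) :
    (Pbox c (2 * c) : ℤ) - (Pbox c ((c : ℤ) - 2) : ℤ) = ⌈((c : ℚ) + 1) / 3⌉ := by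
  match c with
  | 0 =>
    rw [pbox_neg 0 (by norm_num)]
    have h := pbox_two 0
    norm_num at h ⊢
    rw [h]
    norm_num [show (Fbox 0).card = 1 by decide]
  | 1 =>
    rw [pbox_neg 1 (by norm_num)]
    have h := pbox_two 1
    norm_num at h ⊢
    rw [h]
    norm_num [show (Fbox 1).card = 1 by decide]
  | (d+2) =>
    have h1 : Pbox (d+2) (2 * ((d:ℤ)+2)) = (Fbox (d+2)).card := by
      rw [show (2*((d:ℤ)+2)) = 2*((d+2:ℕ):ℤ) by push_cast; ring]
      exact pbox_two (d+2)
    have h2 := pbox_minus d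
    have h3 := Acard d
    have hc : ((d:ℤ)+2) = ((d+2 : ℕ) : ℤ) := by push_cast; ring
    rw [show (2 * ((d+2:ℕ):ℤ)) = 2 * ((d:ℤ)+2) by push_cast; ring,
      show (((d+2:ℕ):ℤ) - 2) = ((d:ℤ)+2) - 2 by push_cast; ring, h1]
    have h2' : Pbox (d+2) (((d:ℤ)+2) - 2) = (Fbox d).card := h2
    rw [h2']
    rw [show (((d+2:ℕ):ℚ) + 1)/3 = ((d:ℚ)+3)/3 by push_cast; ring]
    exact h3
end

section
/- For an integer c ≥ 0, the number of multisets (n₁,…,n_c) with n_i ∈ {0,1,2,3}, ∑ n_i = 2c, and at most one n_i equal to 2, is m + 1 where c = 3m + t with 0 ≤ t < 3 (i.e., equals ⌊c/3⌋ + 1). -/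
open Multiset

def aux19 (c k : ℕ) : Multiset ℕ :=
  replicate k 0 + replicate ((c - 3*k)/2) 1 + replicate ((c - 3*k)%2) 2 +
    replicate ((c - 3*k)/2 + 2*k) 3

lemma aux19_count (c k x : ℕ) :
    (aux19 c k).count x =
      (if x = 0 then k else 0) + (if x = 1 then (c - 3*k)/2 else 0) +
      (if x = 2 then (c - 3*k)%2 else 0) +
      (if x = 3 then (c - 3*k)/2 + 2*k else 0) := by
  simp [aux19, count_replicate]
  split_ifs <;> omega

/-- The number of multisets `(n₁, …, n_c)` with `n_i ∈ {0,1,2,3}`, `∑ n_i = 2c` and at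
most one `n_i` equal to `2` is `⌊c/3⌋ + 1`. -/
theorem statement19 (c : ℕ) :
    Set.ncard {m : Multiset ℕ | Multiset.card m = c ∧ (∀ x ∈ m, x ≤ 3) ∧
      m.sum = 2 * c ∧ m.count 2 ≤ 1} = c / 3 + 1 := by
  have hset : {m : Multiset ℕ | Multiset.card m = c ∧ (∀ x ∈ m, x ≤ 3) ∧
      m.sum = 2 * c ∧ m.count 2 ≤ 1} = aux19 c '' Set.Iic (c/3) := by
    ext m
    simp only [Set.mem_setOf_eq, Set.mem_image, Set.mem_Iic]
    constructor
    · rintro ⟨hcard, hle, hsum, h2⟩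
      have hsub : m.toFinset ⊆ Finset.range 4 := by
        intro x hx
        rw [Multiset.mem_toFinset] at hx
        have := hle x hx
        simp only [Finset.mem_range]; omega
      have hzero : ∀ x ∈ Finset.range 4, x ∉ m.toFinset → m.count x = 0 := by
        intro x _ hx
        rw [Multiset.mem_toFinset] at hx
        exact count_eq_zero_of_notMem hx
      have hc : m.count 0 + m.count 1 + m.count 2 + m.count 3 = c := by
        rw [← hcard, ← Multiset.toFinset_sum_count_eq,
          Finset.sum_subset hsub hzero]
        simp [Finset.sum_range_succ]
      have hs : m.count 1 + 2 * m.count 2 + 3 * m.count 3 = 2 * c := by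
        have hm : m.sum = ∑ a ∈ m.toFinset, m.count a • a := by
          conv_lhs => rw [← Multiset.map_id m]
          rw [Finset.sum_multiset_map_count]
          rfl
        rw [← hsum, hm,
          Finset.sum_subset hsub (by intro x hx hx'; simp [hzero x hx hx'])]
        simp [Finset.sum_range_succ]; ring
      refine ⟨m.count 0, by omega, ?_⟩
      have h1 : m.count 1 = (c - 3 * m.count 0)/2 := by omega
      have h2' : m.count 2 = (c - 3 * m.count 0)%2 := by omega
      have h3 : m.count 3 = (c - 3 * m.count 0)/2 + 2 * m.count 0 := by omega
      ext x
      rw [aux19_count]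
      match x with
      | 0 => simp
      | 1 => simpa using h1.symm
      | 2 => simpa using h2'.symm
      | 3 => simpa using h3.symm
      | (n+4) =>
        have : (n+4) ∉ m := fun h => by have := hle _ h; omega
        simp [count_eq_zero_of_notMem this]
    · rintro ⟨k, hk, rfl⟩
      have h3k : 3 * k ≤ c := by omega
      refine ⟨?_, ?_, ?_, ?_⟩
      · simp only [aux19, card_add, card_replicate]; omega
      · intro x hx
        simp only [aux19, Multiset.mem_add] at hx
        rcases hx with ((hx | hx) | hx) | hx <;>
          rw [Multiset.eq_of_mem_replicate hx] <;> omega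
      · simp only [aux19, Multiset.sum_add, Multiset.sum_replicate, smul_eq_mul]
        omega
      · rw [aux19_count]; simp; omega
  rw [hset]
  have hinj : Set.InjOn (aux19 c) (Set.Iic (c/3)) := by
    intro a _ b _ hab
    have := congrArg (Multiset.count 0) hab
    simpa [aux19_count] using this
  rw [Set.ncard_image_of_injOn hinj, ← Finset.coe_Iic, Set.ncard_coe_finset, Nat.card_Iic]
end
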